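/- arXiv:2508.15051 — 6 statements merged into one kernel-verified Lean document; each statement's English description precedes it below -/
import Mathlib

section
/- Let n, d ≥ 1, r > 0, λ ∈ [0,1]^n, and let P be a probability measure on ℝ^d supported in the closed Euclidean ball of radius r centered at the origin. Let Z₁,…,Zₙ be a λ-contaminated sample of P. Then for every weight vector w ∈ Δₙ, E[‖Σᵢ wᵢZᵢ − μ_P‖₂²] ≤ 7r²(‖w‖₂² + 3(wᵀλ)²). -/
open MeasureTheory ProbabilityTheory

noncomputable section

lemma coord_abs_le_norm {d : ℕ} (x : EuclideanSpace ℝ (Fin d)) (k : Fin d) : |x k| ≤ ‖x‖ := by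
  rw [EuclideanSpace.norm_eq, ← Real.sqrt_sq_eq_abs]
  apply Real.sqrt_le_sqrt
  have := Finset.single_le_sum (f := fun i => ‖x i‖ ^ 2) (fun i _ => sq_nonneg _)
    (Finset.mem_univ k)
  simpa [Real.norm_eq_abs, sq_abs] using this

lemma integrable_of_bound {Ω : Type*} [MeasurableSpace Ω] {Pr : Measure Ω}
    [IsProbabilityMeasure Pr] {E : Type*} [NormedAddCommGroup E] {f : Ω → E}
    (hf : AEStronglyMeasurable f Pr) (M : ℝ) (hb : ∀ᵐ ω ∂Pr, ‖f ω‖ ≤ M) :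
    Integrable f Pr :=
  (integrable_const M).mono' hf hb

lemma integral_inner_of_indep {Ω : Type*} [MeasurableSpace Ω] {Pr : Measure Ω}
    [IsProbabilityMeasure Pr] {d : ℕ} {U V : Ω → EuclideanSpace ℝ (Fin d)}
    (hU : Measurable U) (hV : Measurable V) (hIndep : IndepFun U V Pr)
    {MU MV : ℝ} (hUb : ∀ᵐ ω ∂Pr, ‖U ω‖ ≤ MU) (hVb : ∀ᵐ ω ∂Pr, ‖V ω‖ ≤ MV) :
    ∫ ω, (inner ℝ (U ω) (V ω) : ℝ) ∂Pr = (inner ℝ (∫ ω, U ω ∂Pr) (∫ ω, V ω ∂Pr) : ℝ) := by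
  have hUint : Integrable U Pr := integrable_of_bound hU.aestronglyMeasurable MU hUb
  have hVint : Integrable V Pr := integrable_of_bound hV.aestronglyMeasurable MV hVb
  have hUk : ∀ k, Measurable fun ω => U ω k := fun k => ((measurable_pi_apply k).comp (WithLp.measurable_ofLp _ _)).comp hU
  have hVk : ∀ k, Measurable fun ω => V ω k := fun k => ((measurable_pi_apply k).comp (WithLp.measurable_ofLp _ _)).comp hV
  have hUkb : ∀ k, ∀ᵐ ω ∂Pr, |U ω k| ≤ MU := fun k =>
    hUb.mono fun ω h => (coord_abs_le_norm (U ω) k).trans h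
  have hVkb : ∀ k, ∀ᵐ ω ∂Pr, |V ω k| ≤ MV := fun k =>
    hVb.mono fun ω h => (coord_abs_le_norm (V ω) k).trans h
  have hUki : ∀ k, Integrable (fun ω => U ω k) Pr := fun k =>
    integrable_of_bound (hUk k).aestronglyMeasurable MU (by simpa using hUkb k)
  have hVki : ∀ k, Integrable (fun ω => V ω k) Pr := fun k =>
    integrable_of_bound (hVk k).aestronglyMeasurable MV (by simpa using hVkb k)
  have hprodi : ∀ k, Integrable (fun ω => U ω k * V ω k) Pr := by
    intro k
    refine integrable_of_bound ((hUk k).mul (hVk k)).aestronglyMeasurable (MU * MV) ?_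
    filter_upwards [hUkb k, hVkb k] with ω h1 h2
    rw [Real.norm_eq_abs, abs_mul]
    exact mul_le_mul h1 h2 (abs_nonneg _) ((abs_nonneg _).trans h1)
  have hcoordU : ∀ k, ∫ ω, U ω k ∂Pr = (∫ ω, U ω ∂Pr) k := by
    intro k
    have := (EuclideanSpace.proj k (𝕜 := ℝ)).integral_comp_comm hUint
    simpa using this
  have hcoordV : ∀ k, ∫ ω, V ω k ∂Pr = (∫ ω, V ω ∂Pr) k := by
    intro k
    have := (EuclideanSpace.proj k (𝕜 := ℝ)).integral_comp_comm hVint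
    simpa using this
  have hprod : ∀ k, ∫ ω, U ω k * V ω k ∂Pr
      = (∫ ω, U ω ∂Pr) k * (∫ ω, V ω ∂Pr) k := by
    intro k
    have hind : IndepFun (fun ω => U ω k) (fun ω => V ω k) Pr := by
      have h := hIndep.comp ((measurable_pi_apply k).comp (WithLp.measurable_ofLp 2 (Fin d → ℝ)))
        ((measurable_pi_apply k).comp (WithLp.measurable_ofLp 2 (Fin d → ℝ)))
      exact h
    have := hind.integral_fun_mul_eq_mul_integral (hUki k).aestronglyMeasurable (hVki k).aestronglyMeasurable
    rw [← hcoordU, ← hcoordV]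
    all_goals exact this
  calc ∫ ω, (inner ℝ (U ω) (V ω) : ℝ) ∂Pr
      = ∫ ω, ∑ k, U ω k * V ω k ∂Pr := by
        refine integral_congr_ae (.of_forall fun ω => ?_)
        simp [PiLp.inner_apply, RCLike.inner_apply]; exact Finset.sum_congr rfl fun _ _ => mul_comm _ _
    _ = ∑ k, ∫ ω, U ω k * V ω k ∂Pr := integral_finset_sum _ fun k _ => hprodi k
    _ = ∑ k, (∫ ω, U ω ∂Pr) k * (∫ ω, V ω ∂Pr) k := by simp_rw [hprod]
    _ = _ := by simp [PiLp.inner_apply, RCLike.inner_apply]; exact Finset.sum_congr rfl fun _ _ => mul_comm _ _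


/-- The family of codomain types used to express the mutual independence of the clean samples
`X₁,…,Xₙ` (valued in `E`) and the Bernoulli contamination indicators `B₁,…,Bₙ` (valued in `ℝ`). -/
abbrev MixFam (E : Type) (n : ℕ) : Fin n ⊕ Fin n → Type
  | .inl _ => E
  | .inr _ => ℝ

/-- The measurable-space structures on the codomains. -/
def mixMS (E : Type) [MeasurableSpace E] (n : ℕ) :
    ∀ j : Fin n ⊕ Fin n, MeasurableSpace (MixFam E n j)
  | .inl _ => (inferInstance : MeasurableSpace E)
  | .inr _ => (inferInstance : MeasurableSpace ℝ)

/-- The combined family `(X₁,…,Xₙ,B₁,…,Bₙ)`. -/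
def mixFun {Ω : Type*} {E : Type} {n : ℕ} (X : Fin n → Ω → E) (B : Fin n → Ω → ℝ) :
    ∀ j : Fin n ⊕ Fin n, Ω → MixFam E n j
  | .inl i => X i
  | .inr i => B i

/-- `Z₁,…,Zₙ` is a `λ`-contaminated sample of `P` (a measure on a normed space `E`,
supported in the ball of radius `r`): there are clean i.i.d. samples `Xᵢ ∼ P`, Bernoulli
variables `Bᵢ` with `P(Bᵢ = 1) = λᵢ`, mutually independent of the `Xᵢ`'s, and arbitrary
(measurable) outliers `X̃ᵢ` with `‖X̃ᵢ‖ ≤ r` a.s., such that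
`Zᵢ = (1 − Bᵢ)Xᵢ + BᵢX̃ᵢ`. -/
def IsContamSample {Ω : Type*} {E : Type} [MeasurableSpace Ω] [MeasurableSpace E]
    [NormedAddCommGroup E] [NormedSpace ℝ E]
    (Pr : Measure Ω) {n : ℕ} (P : Measure E) (r : ℝ) (lam : Fin n → ℝ)
    (X Xt : Fin n → Ω → E) (B : Fin n → Ω → ℝ) (Z : Fin n → Ω → E) : Prop :=
  (∀ i, Measurable (X i)) ∧ (∀ i, Measurable (B i)) ∧ (∀ i, Measurable (Xt i)) ∧
  (∀ i, Measure.map (X i) Pr = P) ∧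
  (∀ i ω, B i ω = 0 ∨ B i ω = 1) ∧
  (∀ i, Pr {ω | B i ω = 1} = ENNReal.ofReal (lam i)) ∧
  iIndepFun (m := mixMS E n) (mixFun X B) Pr ∧
  (∀ i, ∀ᵐ ω ∂Pr, ‖Xt i ω‖ ≤ r) ∧
  (∀ i ω, Z i ω = (1 - B i ω) • X i ω + (B i ω) • Xt i ω)

set_option maxHeartbeats 1600000 in
/-- for a `λ`-contaminated sample of a distribution `P` on `ℝ^d` supported in
the ball of radius `r`, every simplex-weighted linear estimator satisfies
`E[‖Σᵢ wᵢZᵢ − μ_P‖² ] ≤ 7r²(‖w‖₂² + 3(wᵀλ)²)`. -/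
theorem bounded_mean_estimation_upper_bound
    (n d : ℕ) (hn : 1 ≤ n) (hd : 1 ≤ d) (r : ℝ) (hr : 0 < r)
    (lam : Fin n → ℝ) (hlam : ∀ i, lam i ∈ Set.Icc (0:ℝ) 1)
    (P : Measure (EuclideanSpace ℝ (Fin d))) [IsProbabilityMeasure P]
    (hP : ∀ᵐ x ∂P, ‖x‖ ≤ r)
    {Ω : Type*} [MeasurableSpace Ω] (Pr : Measure Ω) [IsProbabilityMeasure Pr]
    (X Xt : Fin n → Ω → EuclideanSpace ℝ (Fin d)) (B : Fin n → Ω → ℝ)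
    (Z : Fin n → Ω → EuclideanSpace ℝ (Fin d))
    (hsample : IsContamSample Pr P r lam X Xt B Z)
    (w : Fin n → ℝ) (hw : w ∈ stdSimplex ℝ (Fin n)) :
    ∫ ω, ‖(∑ i, w i • Z i ω) - ∫ x, x ∂P‖^2 ∂Pr ≤
      7 * r^2 * ((∑ i, (w i)^2) + 3 * (∑ i, w i * lam i)^2) := by
  obtain ⟨hXm, hBm, hXtm, hXlaw, hB01, hBlam, hindep, hXtr, hZ⟩ := hsample
  have hw0 : ∀ i, 0 ≤ w i := hw.1
  have hw1 : ∑ i, w i = 1 := hw.2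
  set μ := ∫ x, x ∂P with hμdef
  set s : ℝ := ∑ i, (w i)^2 with hsdef
  set t : ℝ := ∑ i, w i * lam i with htdef
  have hs0 : 0 ≤ s := Finset.sum_nonneg fun i _ => sq_nonneg _
  -- boundedness of the clean samples
  have hXr : ∀ i, ∀ᵐ ω ∂Pr, ‖X i ω‖ ≤ r := by
    intro i
    have h1 : ∀ᵐ x ∂(Measure.map (X i) Pr), ‖x‖ ≤ r := by rw [hXlaw i]; exact hP
    exact (ae_map_iff (hXm i).aemeasurable
      (measurableSet_le measurable_norm measurable_const)).mp h1
  -- basic facts about the Bernoulli variables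
  have hB0 : ∀ i ω, 0 ≤ B i ω := fun i ω => by rcases hB01 i ω with h | h <;> rw [h] <;> norm_num
  have hB1 : ∀ i ω, B i ω ≤ 1 := fun i ω => by rcases hB01 i ω with h | h <;> rw [h] <;> norm_num
  have hBsq : ∀ i ω, B i ω * B i ω = B i ω := fun i ω => by
    rcases hB01 i ω with h | h <;> rw [h] <;> norm_num
  have hBint : ∀ i, Integrable (B i) Pr := fun i =>
    integrable_of_bound (hBm i).aestronglyMeasurable 1
      (Filter.Eventually.of_forall fun ω => by
        rw [Real.norm_eq_abs, abs_of_nonneg (hB0 i ω)]; exact hB1 i ω)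
  have hXint : ∀ i, Integrable (X i) Pr := fun i =>
    integrable_of_bound (hXm i).aestronglyMeasurable r (hXr i)
  have hXmean : ∀ i, ∫ ω, X i ω ∂Pr = μ := by
    intro i
    have h : ∫ x, x ∂(Measure.map (X i) Pr) = ∫ ω, X i ω ∂Pr :=
      integral_map (hXm i).aemeasurable aestronglyMeasurable_id
    rw [hμdef, ← hXlaw i, h]
  -- mean of the Bernoulli variables
  have hEB : ∀ i, ∫ ω, B i ω ∂Pr = lam i := by
    intro i
    have hset : MeasurableSet {ω | B i ω = 1} := (hBm i) (measurableSet_singleton 1)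
    have h1 : (fun ω => B i ω) = Set.indicator {ω | B i ω = 1} (fun _ => (1:ℝ)) := by
      funext ω
      rcases hB01 i ω with h | h
      · rw [h, Set.indicator_of_notMem]
        simp only [Set.mem_setOf_eq, h]; norm_num
      · rw [h, Set.indicator_of_mem]; exact h
    rw [h1]
    have := integral_indicator_one (μ := Pr) hset
    rw [show (Set.indicator {ω | B i ω = 1} (fun _ => (1:ℝ))) =
        Set.indicator {ω | B i ω = 1} 1 from rfl, this, measureReal_def, hBlam i,
      ENNReal.toReal_ofReal (hlam i).1]
  -- products of distinct Bernoullis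
  have hEBB : ∀ i j, i ≠ j → ∫ ω, B i ω * B j ω ∂Pr = lam i * lam j := by
    intro i j hij
    have hne : (Sum.inr i : Fin n ⊕ Fin n) ≠ Sum.inr j := by
      simp only [ne_eq, Sum.inr.injEq]; exact hij
    have hind : IndepFun (B i) (B j) Pr := hindep.indepFun hne
    have h := hind.integral_fun_mul_eq_mul_integral (hBint i).aestronglyMeasurable (hBint j).aestronglyMeasurable
    rw [← hEB i, ← hEB j]
    exact h
  -- the quadratic form bound on the Bernoullis
  have hwBm : Measurable fun ω => ∑ i, w i * B i ω :=
    Finset.measurable_sum _ fun i _ => (measurable_const.mul (hBm i))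
  have hwB0 : ∀ ω, 0 ≤ ∑ i, w i * B i ω := fun ω =>
    Finset.sum_nonneg fun i _ => mul_nonneg (hw0 i) (hB0 i ω)
  have hwB1 : ∀ ω, ∑ i, w i * B i ω ≤ 1 := fun ω => by
    calc ∑ i, w i * B i ω ≤ ∑ i, w i :=
          Finset.sum_le_sum fun i _ => by
            nlinarith [hw0 i, hB0 i ω, hB1 i ω]
      _ = 1 := hw1
  have hBBi : ∀ i j : Fin n, Integrable (fun ω => B i ω * B j ω) Pr := fun i j =>
    integrable_of_bound ((hBm i).mul (hBm j)).aestronglyMeasurable 1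
      (Filter.Eventually.of_forall fun ω => by
        rw [Real.norm_eq_abs, abs_mul, abs_of_nonneg (hB0 i ω), abs_of_nonneg (hB0 j ω)]
        nlinarith [hB0 i ω, hB0 j ω, hB1 i ω, hB1 j ω])
  have hq : ∫ ω, (∑ i, w i * B i ω)^2 ∂Pr ≤ (1/4) * s + t^2 := by
    have hexp : ∀ ω, (∑ i, w i * B i ω)^2
        = ∑ i, ∑ j, (w i * w j) * (B i ω * B j ω) := by
      intro ω
      rw [sq, Finset.sum_mul_sum]
      exact Finset.sum_congr rfl fun i _ => Finset.sum_congr rfl fun j _ => by ring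
    have h1 : ∫ ω, (∑ i, w i * B i ω)^2 ∂Pr
        = ∑ i, ∑ j, (w i * w j) * ∫ ω, B i ω * B j ω ∂Pr := by
      simp_rw [hexp]
      rw [integral_finset_sum _ fun i _ => integrable_finset_sum _ fun j _ =>
        (hBBi i j).const_mul _]
      refine Finset.sum_congr rfl fun i _ => ?_
      rw [integral_finset_sum _ fun j _ => (hBBi i j).const_mul _]
      exact Finset.sum_congr rfl fun j _ => integral_const_mul _ _
    have h2 : ∀ i j : Fin n, ∫ ω, B i ω * B j ω ∂Pr
        ≤ lam i * lam j + (if i = j then (1/4 : ℝ) else 0) := by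
      intro i j
      by_cases hij : i = j
      · subst hij
        have hBB : ∫ ω, B i ω * B i ω ∂Pr = lam i := by
          simp_rw [hBsq i]; exact hEB i
        rw [hBB, if_pos rfl]
        nlinarith [sq_nonneg (lam i - 1/2)]
      · rw [hEBB i j hij, if_neg hij]; simp
    have h3 : ∑ i, ∑ j, (w i * w j) * ∫ ω, B i ω * B j ω ∂Pr
        ≤ ∑ i, ∑ j, (w i * w j) * (lam i * lam j + (if i = j then (1/4:ℝ) else 0)) := by
      refine Finset.sum_le_sum fun i _ => Finset.sum_le_sum fun j _ => ?_
      exact mul_le_mul_of_nonneg_left (h2 i j) (mul_nonneg (hw0 i) (hw0 j))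
    have h4 : ∑ i, ∑ j, (w i * w j) * (lam i * lam j + (if i = j then (1/4:ℝ) else 0))
        = t^2 + (1/4) * s := by
      have e1 : ∀ i j : Fin n, (w i * w j) * (lam i * lam j + (if i = j then (1/4:ℝ) else 0))
          = (w i * lam i) * (w j * lam j) + (if j = i then (w i * w j) * (1/4:ℝ) else 0) := by
        intro i j
        by_cases hij : i = j
        · subst hij; simp; ring
        · rw [if_neg hij, if_neg (Ne.symm hij)]; ring
      simp_rw [e1]
      rw [Finset.sum_congr rfl fun i _ => Finset.sum_add_distrib, Finset.sum_add_distrib]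
      congr 1
      · rw [htdef, sq, Finset.sum_mul_sum]
      · have e2 : ∀ i : Fin n, (∑ j, if j = i then w i * w j * (1/4:ℝ) else 0)
            = (1/4) * (w i)^2 := by
          intro i
          simp only [Finset.sum_ite_eq', Finset.mem_univ, if_true]
          ring
        rw [hsdef, Finset.mul_sum]
        exact Finset.sum_congr rfl fun i _ => e2 i
    rw [h1]
    calc _ ≤ _ := h3
      _ = t^2 + (1/4)*s := h4
      _ = (1/4) * s + t^2 := by ring
  -- the decomposition S = A + C
  set A : Ω → EuclideanSpace ℝ (Fin d) := fun ω => (∑ i, w i • X i ω) - μ with hAdef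
  set C : Ω → EuclideanSpace ℝ (Fin d) :=
    fun ω => ∑ i, (w i * B i ω) • (Xt i ω - X i ω) with hCdef
  have hdecomp : ∀ ω, (∑ i, w i • Z i ω) - μ = A ω + C ω := by
    intro ω
    have hterm : ∀ i, w i • Z i ω = w i • X i ω + (w i * B i ω) • (Xt i ω - X i ω) := by
      intro i; rw [hZ i ω]; module
    simp only [hAdef, hCdef, hterm, Finset.sum_add_distrib]
    abel
  have hAm : Measurable A := by
    simp only [hAdef]
    exact (Finset.measurable_sum _ fun i _ => (hXm i).const_smul (w i)).sub measurable_const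
  have hCm : Measurable C := by
    simp only [hCdef]
    exact Finset.measurable_sum _
      fun i _ => (measurable_const.mul (hBm i)).smul ((hXtm i).sub (hXm i))
  have hXall : ∀ᵐ ω ∂Pr, ∀ i, ‖X i ω‖ ≤ r := ae_all_iff.mpr hXr
  have hXtall : ∀ᵐ ω ∂Pr, ∀ i, ‖Xt i ω‖ ≤ r := ae_all_iff.mpr hXtr
  have hAb : ∀ᵐ ω ∂Pr, ‖A ω‖ ≤ r + ‖μ‖ := by
    filter_upwards [hXall] with ω hx
    simp only [hAdef]
    calc ‖(∑ i, w i • X i ω) - μ‖ ≤ ‖∑ i, w i • X i ω‖ + ‖μ‖ := norm_sub_le _ _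
      _ ≤ (∑ i, w i * r) + ‖μ‖ := by
          refine add_le_add_left ((norm_sum_le _ _).trans
            (Finset.sum_le_sum fun i _ => ?_)) _
          rw [norm_smul, Real.norm_eq_abs, abs_of_nonneg (hw0 i)]
          exact mul_le_mul_of_nonneg_left (hx i) (hw0 i)
      _ = r + ‖μ‖ := by rw [← Finset.sum_mul, hw1, one_mul]
  have hCb0 : ∀ᵐ ω ∂Pr, ‖C ω‖ ≤ (∑ i, w i * B i ω) * (2*r) := by
    filter_upwards [hXall, hXtall] with ω hx hxt
    simp only [hCdef]
    refine (norm_sum_le _ _).trans ?_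
    rw [Finset.sum_mul]
    refine Finset.sum_le_sum fun i _ => ?_
    rw [norm_smul, Real.norm_eq_abs, abs_of_nonneg (mul_nonneg (hw0 i) (hB0 i ω))]
    refine mul_le_mul_of_nonneg_left ?_ (mul_nonneg (hw0 i) (hB0 i ω))
    calc ‖Xt i ω - X i ω‖ ≤ ‖Xt i ω‖ + ‖X i ω‖ := norm_sub_le _ _
      _ ≤ r + r := add_le_add (hxt i) (hx i)
      _ = 2*r := by ring
  have hCb : ∀ᵐ ω ∂Pr, ‖C ω‖ ≤ 2*r := by
    filter_upwards [hCb0] with ω h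
    refine h.trans ?_
    nlinarith [hwB0 ω, hwB1 ω, hr.le]
  have hA2int : Integrable (fun ω => ‖A ω‖^2) Pr :=
    integrable_of_bound (hAm.norm.pow_const 2).aestronglyMeasurable ((r+‖μ‖)^2)
      (hAb.mono fun ω h => by
        rw [Real.norm_eq_abs, abs_of_nonneg (sq_nonneg _)]
        exact pow_le_pow_left₀ (norm_nonneg _) h 2)
  have hC2int : Integrable (fun ω => ‖C ω‖^2) Pr :=
    integrable_of_bound (hCm.norm.pow_const 2).aestronglyMeasurable ((2*r)^2)
      (hCb.mono fun ω h => by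
        rw [Real.norm_eq_abs, abs_of_nonneg (sq_nonneg _)]
        exact pow_le_pow_left₀ (norm_nonneg _) h 2)
  have hwB2int : Integrable (fun ω => (∑ i, w i * B i ω)^2) Pr :=
    integrable_of_bound (hwBm.pow_const 2).aestronglyMeasurable 1
      (Filter.Eventually.of_forall fun ω => by
        rw [Real.norm_eq_abs, abs_of_nonneg (sq_nonneg _)]
        nlinarith [hwB0 ω, hwB1 ω])
  -- Step C : contamination term
  have hstepC : ∫ ω, ‖C ω‖^2 ∂Pr ≤ r^2 * s + 4 * r^2 * t^2 := by
    have h1 : ∫ ω, ‖C ω‖^2 ∂Pr ≤ ∫ ω, 4*r^2*(∑ i, w i * B i ω)^2 ∂Pr := by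
      refine integral_mono_ae hC2int (hwB2int.const_mul _) ?_
      filter_upwards [hCb0] with ω h
      have h2 : ‖C ω‖^2 ≤ ((∑ i, w i * B i ω) * (2*r))^2 :=
        pow_le_pow_left₀ (norm_nonneg _) h 2
      refine h2.trans_eq ?_
      ring
    rw [integral_const_mul] at h1
    calc ∫ ω, ‖C ω‖^2 ∂Pr ≤ 4*r^2 * ∫ ω, (∑ i, w i * B i ω)^2 ∂Pr := h1
      _ ≤ 4*r^2 * ((1/4)*s + t^2) := mul_le_mul_of_nonneg_left hq (by positivity)
      _ = r^2 * s + 4*r^2*t^2 := by ring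
  -- Step A : clean term
  have hYm : ∀ i, Measurable fun ω => X i ω - μ := fun i => (hXm i).sub measurable_const
  have hYb : ∀ i, ∀ᵐ ω ∂Pr, ‖X i ω - μ‖ ≤ r + ‖μ‖ := fun i =>
    (hXr i).mono fun ω h => (norm_sub_le _ _).trans (add_le_add_left h _)
  have hYmean : ∀ i, ∫ ω, (X i ω - μ) ∂Pr = 0 := by
    intro i
    rw [integral_sub (hXint i) (integrable_const μ), hXmean i, integral_const]
    simp
  have hinner_int : ∀ i j : Fin n,
      Integrable (fun ω => (inner ℝ (X i ω - μ) (X j ω - μ) : ℝ)) Pr := by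
    intro i j
    refine integrable_of_bound ((hYm i).inner (hYm j)).aestronglyMeasurable ((r+‖μ‖)^2) ?_
    filter_upwards [hYb i, hYb j] with ω h1 h2
    rw [Real.norm_eq_abs]
    calc |(inner ℝ (X i ω - μ) (X j ω - μ) : ℝ)|
        ≤ ‖X i ω - μ‖ * ‖X j ω - μ‖ := abs_real_inner_le_norm _ _
      _ ≤ (r+‖μ‖)*(r+‖μ‖) := mul_le_mul h1 h2 (norm_nonneg _) ((norm_nonneg _).trans h1)
      _ = (r+‖μ‖)^2 := (sq _).symm
  have hcross : ∀ i j, i ≠ j →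
      ∫ ω, (inner ℝ (X i ω - μ) (X j ω - μ) : ℝ) ∂Pr = 0 := by
    intro i j hij
    have hne : (Sum.inl i : Fin n ⊕ Fin n) ≠ Sum.inl j := by
      simp only [ne_eq, Sum.inl.injEq]; exact hij
    have hindXX : IndepFun (X i) (X j) Pr := hindep.indepFun hne
    have hindY : IndepFun (fun ω => X i ω - μ) (fun ω => X j ω - μ) Pr :=
      hindXX.comp (measurable_id.sub measurable_const)
        (measurable_id.sub measurable_const)
    rw [integral_inner_of_indep (hYm i) (hYm j) hindY (hYb i) (hYb j), hYmean i]
    simp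
  have hX2int : ∀ i, Integrable (fun ω => ‖X i ω‖^2) Pr := fun i =>
    integrable_of_bound ((hXm i).norm.pow_const 2).aestronglyMeasurable (r^2)
      ((hXr i).mono fun ω h => by
        rw [Real.norm_eq_abs, abs_of_nonneg (sq_nonneg _)]
        exact pow_le_pow_left₀ (norm_nonneg _) h 2)
  have hXμint : ∀ i, Integrable (fun ω => (inner ℝ (X i ω) μ : ℝ)) Pr := fun i =>
    integrable_of_bound ((hXm i).inner measurable_const).aestronglyMeasurable (r * ‖μ‖)
      ((hXr i).mono fun ω h => by
        rw [Real.norm_eq_abs]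
        exact (abs_real_inner_le_norm _ _).trans
          (mul_le_mul_of_nonneg_right h (norm_nonneg _)))
  have hEX2 : ∀ i, ∫ ω, ‖X i ω‖^2 ∂Pr ≤ r^2 := by
    intro i
    have h := integral_mono_ae (hX2int i) (integrable_const (r^2))
      ((hXr i).mono fun ω h => pow_le_pow_left₀ (norm_nonneg _) h 2)
    simpa [measure_univ] using h
  have hdiag : ∀ i, ∫ ω, (inner ℝ (X i ω - μ) (X i ω - μ) : ℝ) ∂Pr ≤ r^2 := by
    intro i
    have hEXμ : ∫ ω, (inner ℝ (X i ω) μ : ℝ) ∂Pr = ‖μ‖^2 := by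
      have h1 : ∫ ω, (inner ℝ (X i ω) μ : ℝ) ∂Pr = ∫ ω, (innerSL ℝ μ) (X i ω) ∂Pr := by
        refine integral_congr_ae (Filter.Eventually.of_forall fun ω => ?_)
        simp only [innerSL_apply_apply]
        exact real_inner_comm _ _
      have h2 := (innerSL ℝ μ).integral_comp_comm (hXint i)
      rw [h1, h2, hXmean i, innerSL_apply_apply, real_inner_self_eq_norm_sq]
    have hpt : ∀ ω, (inner ℝ (X i ω - μ) (X i ω - μ) : ℝ)
        = ‖X i ω‖^2 - 2 * (inner ℝ (X i ω) μ : ℝ) + ‖μ‖^2 := by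
      intro ω
      rw [real_inner_self_eq_norm_sq, norm_sub_sq_real]
    have h2 : ∫ ω, (inner ℝ (X i ω - μ) (X i ω - μ) : ℝ) ∂Pr
        = (∫ ω, ‖X i ω‖^2 ∂Pr) - 2 * (∫ ω, (inner ℝ (X i ω) μ : ℝ) ∂Pr) + ‖μ‖^2 := by
      have ha : Integrable (fun ω => ‖X i ω‖^2 - 2 * (inner ℝ (X i ω) μ : ℝ)) Pr :=
        (hX2int i).sub ((hXμint i).const_mul 2)
      rw [integral_congr_ae (Filter.Eventually.of_forall hpt),
        integral_add ha (integrable_const _),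
        integral_sub (hX2int i) ((hXμint i).const_mul 2), integral_const_mul,
        integral_const]
      simp [measure_univ]
    rw [h2, hEXμ]
    have := hEX2 i
    nlinarith [sq_nonneg ‖μ‖]
  have hAsum : ∀ ω, A ω = ∑ i, w i • (X i ω - μ) := by
    intro ω
    simp only [hAdef]
    rw [show (∑ i, w i • (X i ω - μ)) = (∑ i, w i • X i ω) - (∑ i, w i • μ) by
        rw [← Finset.sum_sub_distrib]
        exact Finset.sum_congr rfl fun i _ => smul_sub _ _ _]
    rw [← Finset.sum_smul, hw1, one_smul]
  have hAsq : ∀ ω, ‖A ω‖^2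
      = ∑ i, ∑ j, (w i * w j) * (inner ℝ (X i ω - μ) (X j ω - μ) : ℝ) := by
    intro ω
    rw [← real_inner_self_eq_norm_sq, hAsum ω, sum_inner]
    refine Finset.sum_congr rfl fun i _ => ?_
    rw [inner_sum]
    refine Finset.sum_congr rfl fun j _ => ?_
    rw [real_inner_smul_left, real_inner_smul_right]; ring
  have hstepA : ∫ ω, ‖A ω‖^2 ∂Pr ≤ r^2 * s := by
    have h1 : ∫ ω, ‖A ω‖^2 ∂Pr
        = ∑ i, ∑ j, (w i * w j) * ∫ ω, (inner ℝ (X i ω - μ) (X j ω - μ) : ℝ) ∂Pr := by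
      simp_rw [hAsq]
      rw [integral_finset_sum _ fun i _ => integrable_finset_sum _ fun j _ =>
        (hinner_int i j).const_mul _]
      refine Finset.sum_congr rfl fun i _ => ?_
      rw [integral_finset_sum _ fun j _ => (hinner_int i j).const_mul _]
      exact Finset.sum_congr rfl fun j _ => integral_const_mul _ _
    have h2 : ∀ i : Fin n,
        ∑ j, (w i * w j) * ∫ ω, (inner ℝ (X i ω - μ) (X j ω - μ) : ℝ) ∂Pr
        = (w i * w i) * ∫ ω, (inner ℝ (X i ω - μ) (X i ω - μ) : ℝ) ∂Pr := by
      intro i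
      refine Finset.sum_eq_single i (fun j _ hji => ?_)
        (fun h => absurd (Finset.mem_univ i) h)
      rw [hcross i j (Ne.symm hji), mul_zero]
    rw [h1, Finset.sum_congr rfl fun i _ => h2 i, hsdef, Finset.mul_sum]
    refine Finset.sum_le_sum fun i _ => ?_
    calc (w i * w i) * ∫ ω, (inner ℝ (X i ω - μ) (X i ω - μ) : ℝ) ∂Pr
        ≤ (w i * w i) * r^2 :=
          mul_le_mul_of_nonneg_left (hdiag i) (mul_nonneg (hw0 i) (hw0 i))
      _ = r^2 * (w i)^2 := by ring
  -- assembly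
  have hptfinal : ∀ ω, ‖A ω + C ω‖^2 ≤ (3/2)*‖A ω‖^2 + 3*‖C ω‖^2 := by
    intro ω
    have h1 := norm_add_le (A ω) (C ω)
    nlinarith [norm_nonneg (A ω + C ω), norm_nonneg (A ω), norm_nonneg (C ω),
      sq_nonneg (‖A ω‖ - 2*‖C ω‖)]
  have hACint : Integrable (fun ω => ‖A ω + C ω‖^2) Pr := by
    refine integrable_of_bound ((hAm.add hCm).norm.pow_const 2).aestronglyMeasurable
      ((r+‖μ‖+2*r)^2) ?_
    filter_upwards [hAb, hCb] with ω h1 h2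
    rw [Real.norm_eq_abs, abs_of_nonneg (sq_nonneg _)]
    refine pow_le_pow_left₀ (norm_nonneg _) ?_ 2
    calc ‖A ω + C ω‖ ≤ ‖A ω‖ + ‖C ω‖ := norm_add_le _ _
      _ ≤ (r+‖μ‖) + 2*r := add_le_add h1 h2
      _ = r+‖μ‖+2*r := rfl
  have ht2 : (0:ℝ) ≤ t^2 := sq_nonneg t
  calc ∫ ω, ‖(∑ i, w i • Z i ω) - μ‖^2 ∂Pr
      = ∫ ω, ‖A ω + C ω‖^2 ∂Pr := by
        refine integral_congr_ae (Filter.Eventually.of_forall fun ω => ?_)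
        exact congrArg (fun v => ‖v‖^2) (hdecomp ω)
    _ ≤ ∫ ω, ((3/2)*‖A ω‖^2 + 3*‖C ω‖^2) ∂Pr :=
        integral_mono_ae hACint ((hA2int.const_mul _).add (hC2int.const_mul _))
          (Filter.Eventually.of_forall hptfinal)
    _ = (3/2) * ∫ ω, ‖A ω‖^2 ∂Pr + 3 * ∫ ω, ‖C ω‖^2 ∂Pr := by
        rw [integral_add (hA2int.const_mul _) (hC2int.const_mul _),
          integral_const_mul, integral_const_mul]
    _ ≤ (3/2) * (r^2 * s) + 3 * (r^2*s + 4*r^2*t^2) :=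
        add_le_add (mul_le_mul_of_nonneg_left hstepA (by norm_num))
          (mul_le_mul_of_nonneg_left hstepC (by norm_num))
    _ ≤ 7 * r^2 * (s + 3 * t^2) := by nlinarith [sq_nonneg r, hs0, ht2]
end
end

section
/- Let n ≥ 1, c > 0 and λ ∈ [0,1]^n. The function w ↦ ‖w‖₂² + c(wᵀλ)² has a unique minimizer w* over the probability simplex Δₙ, and there exists β ∈ ℝ such that for every i ∈ {1,…,n}, w*ᵢ = max(β − c(w*ᵀλ)λᵢ, 0). -/
/-- The objective `‖w‖₂² + c(wᵀλ)²`. -/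
def obj {n : ℕ} (c : ℝ) (lam w : Fin n → ℝ) : ℝ :=
  (∑ i, (w i) ^ 2) + c * (∑ i, w i * lam i) ^ 2

/-- the function `w ↦ ‖w‖₂² + c(wᵀλ)²` has a unique minimizer `w*` over the
probability simplex `Δₙ`, and there is a `β ∈ ℝ` with `w*ᵢ = max (β − c(w*ᵀλ)λᵢ) 0` for all `i`. -/
theorem unique_minimizer_on_simplex (n : ℕ) (hn : 1 ≤ n) (c : ℝ) (hc : 0 < c)
    (lam : Fin n → ℝ) (hlam : ∀ i, lam i ∈ Set.Icc (0:ℝ) 1) :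
    ∃ w : Fin n → ℝ, w ∈ stdSimplex ℝ (Fin n) ∧
      (∀ v ∈ stdSimplex ℝ (Fin n), obj c lam w ≤ obj c lam v) ∧
      (∀ v ∈ stdSimplex ℝ (Fin n),
        (∀ u ∈ stdSimplex ℝ (Fin n), obj c lam v ≤ obj c lam u) → v = w) ∧
      ∃ β : ℝ, ∀ i, w i = max (β - c * (∑ j, w j * lam j) * lam i) 0 := by
  haveI : NeZero n := ⟨by omega⟩
  -- existence of a minimizer
  have hcomp : IsCompact (stdSimplex ℝ (Fin n)) := isCompact_stdSimplex ℝ (Fin n)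
  have hne : (stdSimplex ℝ (Fin n)).Nonempty :=
    ⟨_, ite_eq_mem_stdSimplex (𝕜 := ℝ) (ι := Fin n) 0⟩
  have hcont : Continuous (obj c lam) := by
    unfold obj; fun_prop
  obtain ⟨w, hw, hwmin'⟩ := hcomp.exists_isMinOn hne hcont.continuousOn
  have hwmin : ∀ v ∈ stdSimplex ℝ (Fin n), obj c lam w ≤ obj c lam v := fun v hv => hwmin' hv
  have hwnn : ∀ i, 0 ≤ w i := hw.1
  have hwsum : ∑ i, w i = 1 := hw.2
  refine ⟨w, hw, hwmin, ?_, ?_⟩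
  · -- uniqueness
    intro v hv hvmin
    have hEq : obj c lam v = obj c lam w := le_antisymm (hvmin w hw) (hwmin v hv)
    set m : Fin n → ℝ := fun i => (v i + w i) / 2 with hm_def
    have hmmem : m ∈ stdSimplex ℝ (Fin n) := by
      have := (convex_stdSimplex ℝ (Fin n)) hv hw (by norm_num : (0:ℝ) ≤ 1/2)
        (by norm_num : (0:ℝ) ≤ 1/2) (by norm_num : (1:ℝ)/2 + 1/2 = 1)
      convert this using 1
      funext i
      simp only [hm_def, Pi.add_apply, Pi.smul_apply, smul_eq_mul]
      ring
    have h1 : ∑ i, m i ^ 2 = (∑ i, v i ^ 2) / 2 + (∑ i, w i ^ 2) / 2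
        - ∑ i, ((v i - w i) / 2) ^ 2 := by
      rw [eq_sub_iff_add_eq, ← Finset.sum_add_distrib, Finset.sum_div, Finset.sum_div,
        ← Finset.sum_add_distrib]
      refine Finset.sum_congr rfl fun i _ => ?_
      simp only [hm_def]; ring
    have h2 : ∑ i, m i * lam i = ((∑ i, v i * lam i) + ∑ i, w i * lam i) / 2 := by
      rw [← Finset.sum_add_distrib, Finset.sum_div]
      refine Finset.sum_congr rfl fun i _ => ?_
      simp only [hm_def]; ring
    have hobjm : obj c lam m = (obj c lam v + obj c lam w) / 2
        - (∑ i, ((v i - w i) / 2) ^ 2)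
        - c * (((∑ i, v i * lam i) - ∑ i, w i * lam i) / 2) ^ 2 := by
      simp only [obj, h1, h2]; ring
    have hle : obj c lam w ≤ obj c lam m := hwmin m hmmem
    have hcsq : 0 ≤ c * (((∑ i, v i * lam i) - ∑ i, w i * lam i) / 2) ^ 2 :=
      mul_nonneg hc.le (sq_nonneg _)
    have hQ0 : ∑ i, ((v i - w i) / 2) ^ 2 ≤ 0 := by
      rw [hobjm] at hle; linarith [hEq]
    have hQnn : (0:ℝ) ≤ ∑ i, ((v i - w i) / 2) ^ 2 :=
      Finset.sum_nonneg fun i _ => sq_nonneg _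
    have hQ : ∑ i, ((v i - w i) / 2) ^ 2 = 0 := le_antisymm hQ0 hQnn
    funext i
    have := (Finset.sum_eq_zero_iff_of_nonneg (fun i _ => sq_nonneg ((v i - w i)/2))).mp hQ
      i (Finset.mem_univ i)
    have h := pow_eq_zero_iff (n := 2) (by norm_num) |>.mp this
    linarith [h]
  · -- KKT characterization
    obtain ⟨i0, hi0⟩ : ∃ i, 0 < w i := by
      by_contra h
      push_neg at h
      have : ∑ i, w i = 0 := Finset.sum_eq_zero fun i _ => le_antisymm (h i) (hwnn i)
      rw [hwsum] at this; norm_num at this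
    set Sw : ℝ := ∑ j, w j * lam j with hSw
    have gradle : ∀ i, 0 < w i → ∀ j, w i + c * Sw * lam i ≤ w j + c * Sw * lam j := by
      intro i hi j
      by_cases hij : i = j
      · subst hij; exact le_rfl
      by_contra hlt
      push_neg at hlt
      set A : ℝ := w j - w i + c * Sw * (lam j - lam i) with hA
      have hAneg : A < 0 := by simp only [hA]; linarith
      set B : ℝ := 2 + c * (lam j - lam i) ^ 2 with hB
      have hBpos : 0 < B := by positivity
      set ε : ℝ := min (w i) (-A / B) with hε_def
      have hεpos : 0 < ε := lt_min hi (div_pos (by linarith) hBpos)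
      have hεwi : ε ≤ w i := min_le_left _ _
      have hεAB : ε ≤ -A / B := min_le_right _ _
      set w' : Fin n → ℝ := fun k =>
        w k + (if k = j then ε else 0) - (if k = i then ε else 0) with hw'_def
      have hw'mem : w' ∈ stdSimplex ℝ (Fin n) := by
        constructor
        · intro k
          simp only [hw'_def]
          by_cases h1 : k = j <;> by_cases h2 : k = i
          · exact absurd (h2.symm.trans h1) hij
          · subst h1; simp only [eq_self_iff_true, if_true, if_neg h2]; linarith [hwnn k]
          · subst h2; simp only [if_neg h1, eq_self_iff_true, if_true]; linarith [hwnn k]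
          · simp only [if_neg h1, if_neg h2]; linarith [hwnn k]
        · simp only [hw'_def]
          rw [Finset.sum_sub_distrib, Finset.sum_add_distrib, hwsum,
            Finset.sum_ite_eq' Finset.univ j (fun _ => ε),
            Finset.sum_ite_eq' Finset.univ i (fun _ => ε)]
          simp
      have hsum2 : ∑ k, w' k ^ 2 = (∑ k, w k ^ 2) + (2 * ε * w j + ε ^ 2)
          + (ε ^ 2 - 2 * ε * w i) := by
        have hterm : ∀ k, w' k ^ 2 = w k ^ 2 + (if k = j then 2 * ε * w j + ε ^ 2 else 0)
            + (if k = i then ε ^ 2 - 2 * ε * w i else 0) := by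
          intro k
          simp only [hw'_def]
          by_cases h1 : k = j <;> by_cases h2 : k = i
          · exact absurd (h2.symm.trans h1) hij
          · subst h1; simp only [eq_self_iff_true, if_true, if_neg h2]; ring
          · subst h2; simp only [if_neg h1, eq_self_iff_true, if_true]; ring
          · simp only [if_neg h1, if_neg h2]; ring
        rw [Finset.sum_congr rfl fun k _ => hterm k, Finset.sum_add_distrib,
          Finset.sum_add_distrib,
          Finset.sum_ite_eq' Finset.univ j (fun _ => 2 * ε * w j + ε ^ 2),
          Finset.sum_ite_eq' Finset.univ i (fun _ => ε ^ 2 - 2 * ε * w i)]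
        simp
      have hsumlam : ∑ k, w' k * lam k = Sw + ε * lam j - ε * lam i := by
        have hterm : ∀ k, w' k * lam k = w k * lam k + (if k = j then ε * lam j else 0)
            - (if k = i then ε * lam i else 0) := by
          intro k
          simp only [hw'_def]
          by_cases h1 : k = j <;> by_cases h2 : k = i
          · exact absurd (h2.symm.trans h1) hij
          · subst h1; simp only [eq_self_iff_true, if_true, if_neg h2]; ring
          · subst h2; simp only [if_neg h1, eq_self_iff_true, if_true]; ring
          · simp only [if_neg h1, if_neg h2]; ring
        rw [Finset.sum_congr rfl fun k _ => hterm k, Finset.sum_sub_distrib,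
          Finset.sum_add_distrib,
          Finset.sum_ite_eq' Finset.univ j (fun _ => ε * lam j),
          Finset.sum_ite_eq' Finset.univ i (fun _ => ε * lam i)]
        simp [hSw]
      have hobj' : obj c lam w' = obj c lam w + 2 * ε * A + ε ^ 2 * B := by
        simp only [obj, hsum2, hsumlam, hA, hB, ← hSw]
        ring
      have hle : obj c lam w ≤ obj c lam w' := hwmin w' hw'mem
      rw [hobj'] at hle
      have h1 : ε * B ≤ -A := (le_div_iff₀ hBpos).mp hεAB
      nlinarith [hεpos, hAneg, h1]
    refine ⟨w i0 + c * Sw * lam i0, fun i => ?_⟩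
    rcases eq_or_lt_of_le (hwnn i) with h0 | hpos
    · -- w i = 0
      have : w i0 + c * Sw * lam i0 ≤ w i + c * Sw * lam i := gradle i0 hi0 i
      rw [← h0] at this ⊢
      rw [max_eq_right (by linarith)]
    · -- w i > 0
      have h1 : w i + c * Sw * lam i ≤ w i0 + c * Sw * lam i0 := gradle i hpos i0
      have h2 : w i0 + c * Sw * lam i0 ≤ w i + c * Sw * lam i := gradle i0 hi0 i
      have : w i0 + c * Sw * lam i0 - c * Sw * lam i = w i := by linarith
      rw [max_eq_left (by linarith)]
      linarith
end

section
/- Let n ≥ 1, c > 0 and λ ∈ [0,1]^n with λ₁ ≤ λ₂ ≤ … ≤ λₙ, and let w* be the unique minimizer of w ↦ ‖w‖₂² + c(wᵀλ)² over the probability simplex Δₙ. For k ∈ {1,…,n} write S₁(k) = Σ_{i≤k} λᵢ and S₂(k) = Σ_{i≤k} λᵢ². Let m = min{k ∈ {1,…,n} : k = n, or λ_{k+1} ≥ (1 + c·S₂(k))/(c·S₁(k))} (where the right-hand side is interpreted as +∞ when S₁(k) = 0). Then m is exactly the number of nonzero coordinates of w*, and with β = (1 + c·S₂(m)) / (m(1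 + c·S₂(m)) − c·S₁(m)²) and α = c·S₁(m)·β / (1 + c·S₂(m)), one has w*ᵢ = β − α·λᵢ for i ≤ m and w*ᵢ = 0 for i > m. -/
def S1 {n : ℕ} (lam : Fin n → ℝ) (k : ℕ) : ℝ :=
  ∑ i ∈ Finset.univ.filter fun i : Fin n => (i : ℕ) < k, lam i

def S2 {n : ℕ} (lam : Fin n → ℝ) (k : ℕ) : ℝ :=
  ∑ i ∈ Finset.univ.filter fun i : Fin n => (i : ℕ) < k, (lam i) ^ 2

noncomputable def mIdx (n : ℕ) (c : ℝ) (lam : Fin n → ℝ) : ℕ :=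
  sInf {k : ℕ | 1 ≤ k ∧ k ≤ n ∧ (k = n ∨ ∃ h : k < n,
    0 < S1 lam k ∧ (1 + c * S2 lam k) / (c * S1 lam k) ≤ lam ⟨k, h⟩)}

lemma filter_lt_succ {n : ℕ} (k : ℕ) (h : k < n) :
    (Finset.univ.filter fun i : Fin n => (i : ℕ) < k + 1)
      = insert ⟨k, h⟩ (Finset.univ.filter fun i : Fin n => (i : ℕ) < k) := by
  ext i
  simp [Fin.ext_iff]
  omega

lemma S1_succ {n : ℕ} (lam : Fin n → ℝ) (k : ℕ) (h : k < n) :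
    S1 lam (k + 1) = S1 lam k + lam ⟨k, h⟩ := by
  unfold S1
  rw [filter_lt_succ k h, Finset.sum_insert (by simp)]
  ring

lemma S2_succ {n : ℕ} (lam : Fin n → ℝ) (k : ℕ) (h : k < n) :
    S2 lam (k + 1) = S2 lam k + (lam ⟨k, h⟩) ^ 2 := by
  unfold S2
  rw [filter_lt_succ k h, Finset.sum_insert (by simp)]
  ring

lemma card_filter_lt {n m : ℕ} (h : m ≤ n) :
    ((Finset.univ.filter fun i : Fin n => (i : ℕ) < m)).card = m := by
  have himg : ((Finset.univ.filter fun i : Fin n => (i : ℕ) < m)).image Fin.val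
      = Finset.range m := by
    ext a
    simp only [Finset.mem_image, Finset.mem_filter, Finset.mem_univ, true_and,
      Finset.mem_range]
    constructor
    · rintro ⟨i, hi, rfl⟩; exact hi
    · intro ha; exact ⟨⟨a, lt_of_lt_of_le ha h⟩, ha, rfl⟩
  calc ((Finset.univ.filter fun i : Fin n => (i : ℕ) < m)).card
      = (((Finset.univ.filter fun i : Fin n => (i : ℕ) < m)).image Fin.val).card :=
        (Finset.card_image_of_injective _ Fin.val_injective).symm
    _ = m := by rw [himg, Finset.card_range]

lemma obj_expand {n : ℕ} (c : ℝ) (lam wt v : Fin n → ℝ) :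
    obj c lam v = obj c lam wt
      + ((∑ i, (v i - wt i) ^ 2)
        + c * ((∑ i, v i * lam i) - (∑ i, wt i * lam i)) ^ 2)
      + (∑ i, (2 * wt i + 2 * c * (∑ j, wt j * lam j) * lam i) * (v i - wt i)) := by
  unfold obj
  have h1 : ∑ i, (v i) ^ 2
      = (∑ i, (wt i) ^ 2) + ((∑ i, (v i - wt i) ^ 2) + ∑ i, 2 * wt i * (v i - wt i)) := by
    rw [← Finset.sum_add_distrib, ← Finset.sum_add_distrib]
    exact Finset.sum_congr rfl fun i _ => by ring
  have h2 : ∑ i, (2 * wt i + 2 * c * (∑ j, wt j * lam j) * lam i) * (v i - wt i)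
      = (∑ i, 2 * wt i * (v i - wt i))
        + 2 * c * (∑ j, wt j * lam j) * ((∑ i, v i * lam i) - (∑ i, wt i * lam i)) := by
    have ha : ∀ i ∈ Finset.univ,
        (2 * wt i + 2 * c * (∑ j, wt j * lam j) * lam i) * (v i - wt i)
          = 2 * wt i * (v i - wt i)
            + 2 * c * (∑ j, wt j * lam j) * (v i * lam i - wt i * lam i) :=
      fun i _ => by ring
    rw [Finset.sum_congr rfl ha, Finset.sum_add_distrib, ← Finset.mul_sum,
      Finset.sum_sub_distrib]
  rw [h1, h2]
  ring

lemma obj_midpoint {n : ℕ} (c : ℝ) (lam a b : Fin n → ℝ) :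
    obj c lam (fun i => (a i + b i) / 2)
      = (obj c lam a + obj c lam b) / 2
        - ((∑ i, (a i - b i) ^ 2) / 4
          + c * ((∑ i, a i * lam i) - (∑ i, b i * lam i)) ^ 2 / 4) := by
  unfold obj
  have h1 : ∑ i, ((a i + b i) / 2) ^ 2
      = ((∑ i, (a i) ^ 2) + (∑ i, (b i) ^ 2)) / 2 - (∑ i, (a i - b i) ^ 2) / 4 := by
    calc ∑ i, ((a i + b i) / 2) ^ 2
        = ∑ i, (((a i) ^ 2 + (b i) ^ 2) / 2 - (a i - b i) ^ 2 / 4) :=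
          Finset.sum_congr rfl fun i _ => by ring
      _ = _ := by
          rw [Finset.sum_sub_distrib, ← Finset.sum_div, ← Finset.sum_div,
            Finset.sum_add_distrib]
  have h2 : ∑ i, ((a i + b i) / 2) * lam i
      = ((∑ i, a i * lam i) + (∑ i, b i * lam i)) / 2 := by
    calc ∑ i, ((a i + b i) / 2) * lam i
        = ∑ i, ((a i * lam i + b i * lam i) / 2) :=
          Finset.sum_congr rfl fun i _ => by ring
      _ = _ := by rw [← Finset.sum_div, Finset.sum_add_distrib]
  rw [h1, h2]
  ring

set_option maxHeartbeats 2000000 in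
/-- closed form of the unique minimizer of `w ↦ ‖w‖₂² + c(wᵀλ)²` over the
probability simplex when `λ` is sorted in nondecreasing order: with `m`, `β`, `α` as above,
`w*ᵢ = β − αλᵢ` for `i ≤ m` and `w*ᵢ = 0` for `i > m`, and `m` is exactly the number of
nonzero coordinates of `w*`. -/
theorem minimizer_closed_form (n : ℕ) (hn : 1 ≤ n) (c : ℝ) (hc : 0 < c)
    (lam : Fin n → ℝ) (hlam : ∀ i, lam i ∈ Set.Icc (0:ℝ) 1) (hsorted : Monotone lam)
    (w : Fin n → ℝ) (hw : w ∈ stdSimplex ℝ (Fin n))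
    (hmin : ∀ v ∈ stdSimplex ℝ (Fin n), obj c lam w ≤ obj c lam v) :
    mIdx n c lam = (Finset.univ.filter fun i : Fin n => w i ≠ 0).card ∧
    ∀ i : Fin n,
      ((i : ℕ) < mIdx n c lam →
        w i = (1 + c * S2 lam (mIdx n c lam)) /
            ((mIdx n c lam : ℝ) * (1 + c * S2 lam (mIdx n c lam))
              - c * (S1 lam (mIdx n c lam)) ^ 2)
          - (c * S1 lam (mIdx n c lam) *
              ((1 + c * S2 lam (mIdx n c lam)) /
                ((mIdx n c lam : ℝ) * (1 + c * S2 lam (mIdx n c lam))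
                  - c * (S1 lam (mIdx n c lam)) ^ 2)) /
              (1 + c * S2 lam (mIdx n c lam))) * lam i) ∧
      (mIdx n c lam ≤ (i : ℕ) → w i = 0) := by
  have hl0 : ∀ i, 0 ≤ lam i := fun i => (hlam i).1
  set m := mIdx n c lam with hmdef
  have hmmem : m ∈ {k : ℕ | 1 ≤ k ∧ k ≤ n ∧ (k = n ∨ ∃ h : k < n,
      0 < S1 lam k ∧ (1 + c * S2 lam k) / (c * S1 lam k) ≤ lam ⟨k, h⟩)} :=
    Nat.sInf_mem ⟨n, hn, le_refl n, Or.inl rfl⟩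
  obtain ⟨hm1, hmn, hm3⟩ := hmmem
  have hmnotmem : ∀ k < m, k ∉ {k : ℕ | 1 ≤ k ∧ k ≤ n ∧ (k = n ∨ ∃ h : k < n,
      0 < S1 lam k ∧ (1 + c * S2 lam k) / (c * S1 lam k) ≤ lam ⟨k, h⟩)} :=
    fun k hk => Nat.notMem_of_lt_sInf hk
  have hS1 : 0 ≤ S1 lam m := Finset.sum_nonneg fun i _ => hl0 i
  have hS2 : 0 ≤ S2 lam m := Finset.sum_nonneg fun i _ => sq_nonneg _
  set E : ℝ := 1 + c * S2 lam m with hEdef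
  have hE : 0 < E := by positivity
  set D : ℝ := (m : ℝ) * E - c * (S1 lam m) ^ 2 with hDdef
  have hCS : (S1 lam m) ^ 2 ≤ (m : ℝ) * S2 lam m := by
    have := sq_sum_le_card_mul_sum_sq
      (s := Finset.univ.filter fun i : Fin n => (i : ℕ) < m) (f := lam)
    rwa [card_filter_lt hmn] at this
  have hD : (m : ℝ) ≤ D := by
    have h1 : (1:ℝ) ≤ (m:ℝ) := by exact_mod_cast hm1
    have : c * (S1 lam m) ^ 2 ≤ c * ((m:ℝ) * S2 lam m) :=
      mul_le_mul_of_nonneg_left hCS hc.le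
    simp only [hDdef, hEdef]
    nlinarith
  have hD0 : 0 < D := lt_of_lt_of_le (by exact_mod_cast hm1) hD
  set β : ℝ := E / D with hβdef
  set α : ℝ := c * S1 lam m * β / E with hαdef
  have hβ : 0 < β := div_pos hE hD0
  have hα0 : 0 ≤ α := by
    apply div_nonneg _ hE.le
    positivity
  -- key strict inequality for i < m
  have hP : ∀ i : Fin n, (i : ℕ) < m → c * S1 lam m * lam i < E := by
    intro i hi
    obtain ⟨k, hmk⟩ : ∃ k, m = k + 1 := ⟨m - 1, by omega⟩
    have hk : k < n := by omega
    have hμ : lam i ≤ lam ⟨k, hk⟩ := hsorted (by simp [Fin.le_def]; omega)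
    have hstep : c * S1 lam k * lam ⟨k, hk⟩ < 1 + c * S2 lam k := by
      rcases Nat.eq_zero_or_pos k with hk0 | hk1
      · subst hk0
        have h0 : S1 lam 0 = 0 := by simp [S1]
        have h02 : S2 lam 0 = 0 := by simp [S2]
        rw [h0, h02]
        have h1 : 0 ≤ lam ⟨0, hk⟩ := hl0 _
        nlinarith
      · have hknot := hmnotmem k (by omega)
        simp only [Set.mem_setOf_eq] at hknot
        push_neg at hknot
        obtain ⟨-, hno⟩ := hknot hk1 (by omega)
        have hS1k : 0 ≤ S1 lam k := Finset.sum_nonneg fun i _ => hl0 i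
        have hS2k : 0 ≤ S2 lam k := Finset.sum_nonneg fun i _ => sq_nonneg _
        rcases eq_or_lt_of_le hS1k with h0 | hpos
        · rw [← h0]
          nlinarith
        · have hlt := hno hk hpos
          have hcS1 : 0 < c * S1 lam k := by positivity
          have := (lt_div_iff₀ hcS1).mp hlt
          nlinarith
    have hS1m : S1 lam (k + 1) = S1 lam k + lam ⟨k, hk⟩ := S1_succ lam k hk
    have hS2m : S2 lam (k + 1) = S2 lam k + (lam ⟨k, hk⟩) ^ 2 := S2_succ lam k hk
    have h1 : c * S1 lam m * lam i ≤ c * S1 lam m * lam ⟨k, hk⟩ := by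
      apply mul_le_mul_of_nonneg_left hμ
      positivity
    have h2 : c * S1 lam m * lam ⟨k, hk⟩ < E := by
      rw [hmk, hS1m]
      simp only [hEdef, hmk, hS2m]
      nlinarith [sq_nonneg (lam ⟨k, hk⟩), hl0 ⟨k, hk⟩]
    exact lt_of_le_of_lt h1 h2
  -- the candidate minimizer
  set wt : Fin n → ℝ := fun i => if (i : ℕ) < m then β - α * lam i else 0 with hwtdef
  have hwt0 : ∀ i : Fin n, m ≤ (i : ℕ) → wt i = 0 := by
    intro i hi
    simp only [hwtdef]
    rw [if_neg (by omega)]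
  have hwtpos : ∀ i : Fin n, (i : ℕ) < m → 0 < wt i := by
    intro i hi
    have hP' := hP i hi
    have hup : α * lam i < β := by
      have h1 : α * lam i = β * (c * S1 lam m * lam i) / E := by rw [hαdef]; ring
      rw [h1, div_lt_iff₀ hE]
      nlinarith
    simp only [hwtdef]
    rw [if_pos hi]
    linarith
  have hsumfilter : ∀ f : Fin n → ℝ,
      (∑ i : Fin n, (if (i : ℕ) < m then f i else 0))
        = ∑ i ∈ Finset.univ.filter fun i : Fin n => (i : ℕ) < m, f i :=
    fun f => (Finset.sum_filter _ _).symm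
  have hsum : ∑ i, wt i = 1 := by
    have h1 : ∑ i, wt i
        = ∑ i ∈ Finset.univ.filter fun i : Fin n => (i : ℕ) < m, (β - α * lam i) := by
      simp only [hwtdef]
      exact hsumfilter _
    have hfold : (∑ i ∈ Finset.univ.filter fun i : Fin n => (i : ℕ) < m, lam i)
        = S1 lam m := rfl
    rw [h1, Finset.sum_sub_distrib, Finset.sum_const, card_filter_lt hmn,
      ← Finset.mul_sum, hfold, nsmul_eq_mul]
    have e2 : α * E = c * S1 lam m * β := by
      rw [hαdef]; exact div_mul_cancel₀ _ hE.ne'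
    have e3 : β * D = E := by
      rw [hβdef]; exact div_mul_cancel₀ _ hD0.ne'
    have key : ((m : ℝ) * β - α * S1 lam m) * E = 1 * E := by
      linear_combination (-(S1 lam m)) * e2 + e3 - β * hDdef
    exact mul_right_cancel₀ hE.ne' key
  have hsdef : ∑ i, wt i * lam i = β * S1 lam m - α * S2 lam m := by
    have h1 : ∀ i : Fin n, wt i * lam i
        = if (i : ℕ) < m then β * lam i - α * (lam i) ^ 2 else 0 := by
      intro i
      by_cases hi : (i : ℕ) < m
      · simp only [hwtdef]; rw [if_pos hi, if_pos hi]; ring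
      · simp only [hwtdef]; rw [if_neg hi, if_neg hi]; ring
    rw [Finset.sum_congr rfl fun i _ => h1 i, hsumfilter, Finset.sum_sub_distrib,
      ← Finset.mul_sum, ← Finset.mul_sum]
    rfl
  have hE' : (0 : ℝ) < 1 + c * S2 lam m := by rw [← hEdef]; exact hE
  have hcs : c * (∑ i, wt i * lam i) = α := by
    have hαE : α * (1 + c * S2 lam m) = c * S1 lam m * β := by
      rw [hαdef, ← hEdef]
      exact div_mul_cancel₀ _ hE.ne'
    rw [hsdef]
    linear_combination (-1 : ℝ) * hαE
  have hwtmem : wt ∈ stdSimplex ℝ (Fin n) := by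
    refine ⟨fun i => ?_, hsum⟩
    by_cases hi : (i : ℕ) < m
    · exact (hwtpos i hi).le
    · rw [hwt0 i (by omega)]
  have hgeq : ∀ i : Fin n, (i : ℕ) < m →
      2 * wt i + 2 * c * (∑ j, wt j * lam j) * lam i = 2 * β := by
    intro i hi
    have h1 : wt i = β - α * lam i := by simp only [hwtdef]; rw [if_pos hi]
    rw [h1]
    linear_combination (2 * lam i) * hcs
  have hgge : ∀ i : Fin n,
      2 * β ≤ 2 * wt i + 2 * c * (∑ j, wt j * lam j) * lam i := by
    intro i
    by_cases hi : (i : ℕ) < m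
    · rw [hgeq i hi]
    · have hmn' : m < n := by omega
      rcases hm3 with h | ⟨hmltn, hS1pos, hthr⟩
      · omega
      · have hlamle : lam ⟨m, hmltn⟩ ≤ lam i := hsorted (by simp [Fin.le_def]; omega)
        have hthr' : E / (c * S1 lam m) ≤ lam i := le_trans hthr hlamle
        have hEle : E ≤ c * S1 lam m * lam i := by
          have := (div_le_iff₀ (by positivity)).mp hthr'
          nlinarith
        have hβle : β ≤ α * lam i := by
          have h3 : α * lam i = β * (c * S1 lam m * lam i) / E := by rw [hαdef]; ring
          rw [h3, le_div_iff₀ hE]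
          nlinarith
        have h2 : 2 * c * (∑ j, wt j * lam j) * lam i = 2 * (α * lam i) := by
          linear_combination (2 * lam i) * hcs
        rw [hwt0 i (by omega), h2]
        linarith
  have hopt : ∀ v ∈ stdSimplex ℝ (Fin n), obj c lam wt ≤ obj c lam v := by
    intro v hv
    obtain ⟨hv0, hv1⟩ := hv
    have hA : 2 * β * 1 ≤ ∑ i, (2 * wt i + 2 * c * (∑ j, wt j * lam j) * lam i) * v i := by
      calc 2 * β * 1 = ∑ i, 2 * β * v i := by rw [← Finset.mul_sum, hv1]
        _ ≤ _ := Finset.sum_le_sum fun i _ =>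
            mul_le_mul_of_nonneg_right (hgge i) (hv0 i)
    have hB : ∑ i, (2 * wt i + 2 * c * (∑ j, wt j * lam j) * lam i) * wt i
        = 2 * β * 1 := by
      have h1 : ∀ i ∈ Finset.univ,
          (2 * wt i + 2 * c * (∑ j, wt j * lam j) * lam i) * wt i = 2 * β * wt i := by
        intro i _
        by_cases hi : (i : ℕ) < m
        · rw [hgeq i hi]
        · rw [hwt0 i (by omega)]; ring
      rw [Finset.sum_congr rfl h1, ← Finset.mul_sum, hsum]
    have hlin : 0 ≤ ∑ i, (2 * wt i + 2 * c * (∑ j, wt j * lam j) * lam i) * (v i - wt i) := by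
      have hsplit : ∑ i, (2 * wt i + 2 * c * (∑ j, wt j * lam j) * lam i) * (v i - wt i)
          = (∑ i, (2 * wt i + 2 * c * (∑ j, wt j * lam j) * lam i) * v i)
            - ∑ i, (2 * wt i + 2 * c * (∑ j, wt j * lam j) * lam i) * wt i := by
        rw [← Finset.sum_sub_distrib]
        exact Finset.sum_congr rfl fun i _ => by ring
      rw [hsplit, hB]
      linarith
    have hquad : 0 ≤ (∑ i, (v i - wt i) ^ 2)
        + c * ((∑ i, v i * lam i) - (∑ i, wt i * lam i)) ^ 2 :=
      add_nonneg (Finset.sum_nonneg fun i _ => sq_nonneg _)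
        (mul_nonneg hc.le (sq_nonneg _))
    rw [obj_expand c lam wt v]
    linarith
  -- uniqueness of the minimizer
  have hobj_eq : obj c lam w = obj c lam wt := le_antisymm (hmin wt hwtmem) (hopt w hw)
  have humem : (fun i => (w i + wt i) / 2) ∈ stdSimplex ℝ (Fin n) := by
    refine ⟨fun i => ?_, ?_⟩
    · have h1 := hw.1 i
      have h2 := hwtmem.1 i
      positivity
    · rw [← Finset.sum_div, Finset.sum_add_distrib, hw.2, hsum]
      norm_num
  have hle := hmin _ humem
  rw [obj_midpoint c lam w wt, hobj_eq] at hle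
  have hQ1 : ∑ i, (w i - wt i) ^ 2 ≤ 0 := by
    have h2 : 0 ≤ c * ((∑ i, w i * lam i) - (∑ i, wt i * lam i)) ^ 2 :=
      mul_nonneg hc.le (sq_nonneg _)
    linarith
  have hww : ∀ i, w i = wt i := by
    intro i
    have hz := (Finset.sum_eq_zero_iff_of_nonneg
      (fun i _ => sq_nonneg (w i - wt i))).mp
      (le_antisymm hQ1 (Finset.sum_nonneg fun i _ => sq_nonneg _)) i (Finset.mem_univ i)
    exact sub_eq_zero.mp (sq_eq_zero_iff.mp hz)
  -- conclusion
  refine ⟨?_, fun i => ⟨fun hi => ?_, fun hi => ?_⟩⟩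
  · have hfeq : (Finset.univ.filter fun i : Fin n => w i ≠ 0)
        = Finset.univ.filter fun i : Fin n => (i : ℕ) < m := by
      ext i
      simp only [Finset.mem_filter, Finset.mem_univ, true_and]
      rw [hww i]
      constructor
      · intro h
        by_contra hlt
        exact h (hwt0 i (by omega))
      · intro h
        exact ne_of_gt (hwtpos i h)
    rw [hfeq, card_filter_lt hmn]
  · rw [hww i]
    simp only [hwtdef]
    rw [if_pos hi]
  · rw [hww i]
    exact hwt0 i hi
end

section
/- Let n ≥ 1 and λ ∈ [0,1]^n, and set N(t) = #{i : λᵢ ≤ t} and n(t) = #{i : λᵢ < t}. If N(1/2) ≥ 4/3 (equivalently, at least 2 of the λᵢ are at most 1/2), then there exists δ* ∈ (0, 1/4] such that N(2δ*) ≥ 1/(12δ*²) and n(2δ*) ≤ 1/(12δ*²). -/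
set_option maxHeartbeats 1000000


/-- `N(t) = #{i : λᵢ ≤ t}`. -/
noncomputable def bigN {n : ℕ} (lam : Fin n → ℝ) (t : ℝ) : ℕ :=
  (Finset.univ.filter fun i : Fin n => lam i ≤ t).card

/-- `n(t) = #{i : λᵢ < t}`. -/
noncomputable def smallN {n : ℕ} (lam : Fin n → ℝ) (t : ℝ) : ℕ :=
  (Finset.univ.filter fun i : Fin n => lam i < t).card

/-- if `N(1/2) ≥ 4/3`, there is `δ* ∈ (0, 1/4]` with `N(2δ*) ≥ 1/(12δ*²)`
and `n(2δ*) ≤ 1/(12δ*²)`. -/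
theorem exists_balanced_threshold (n : ℕ) (hn : 1 ≤ n)
    (lam : Fin n → ℝ) (hlam : ∀ i, lam i ∈ Set.Icc (0:ℝ) 1)
    (h : (4:ℝ)/3 ≤ (bigN lam (1/2) : ℝ)) :
    ∃ δ : ℝ, δ ∈ Set.Ioc (0:ℝ) (1/4) ∧
      1 / (12 * δ^2) ≤ (bigN lam (2*δ) : ℝ) ∧
      (smallN lam (2*δ) : ℝ) ≤ 1 / (12 * δ^2) := by
  classical
  set A : Set ℝ :=
    {δ : ℝ | δ ∈ Set.Ioc (0:ℝ) (1/4) ∧ 1 / (12 * δ^2) ≤ (bigN lam (2*δ) : ℝ)} with hA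
  have hquarter : (1/4 : ℝ) ∈ A := by
    refine ⟨⟨by norm_num, by norm_num⟩, ?_⟩
    have h2 : (2:ℝ) * (1/4) = 1/2 := by norm_num
    rw [h2]
    calc (1:ℝ) / (12 * (1/4)^2) = 4/3 := by norm_num
    _ ≤ _ := h
  have hAne : A.Nonempty := ⟨1/4, hquarter⟩
  set b : ℝ := Real.sqrt (1/(12*n)) with hb
  have hn0 : (0:ℝ) < n := by exact_mod_cast hn
  have hb0 : 0 < b := Real.sqrt_pos.mpr (by positivity)
  have hblb : ∀ δ ∈ A, b ≤ δ := by
    intro δ hδ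
    obtain ⟨⟨hδ0, hδ4⟩, hgN⟩ := hδ
    have hNn : (bigN lam (2*δ) : ℝ) ≤ n := by
      have := Finset.card_filter_le Finset.univ (fun i : Fin n => lam i ≤ 2*δ)
      simpa [bigN] using (Nat.cast_le.mpr this : ((bigN lam (2*δ) : ℕ) : ℝ) ≤ _)
    have h1 : 1/(12*δ^2) ≤ (n:ℝ) := hgN.trans hNn
    have h2 : 1/(12*(n:ℝ)) ≤ δ^2 := by
      rw [div_le_iff₀ (by positivity)] at h1 ⊢
      nlinarith
    calc b ≤ Real.sqrt (δ^2) := Real.sqrt_le_sqrt h2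
    _ = δ := Real.sqrt_sq hδ0.le
  have hbdd : BddBelow A := ⟨b, hblb⟩
  obtain ⟨d, hd⟩ : ∃ d : ℝ, d = sInf A := ⟨_, rfl⟩
  have hdb : b ≤ d := hd ▸ le_csInf hAne hblb
  have hd0 : 0 < d := lt_of_lt_of_le hb0 hdb
  have hd4 : d ≤ 1/4 := by rw [hd]; exact csInf_le hbdd hquarter
  -- right local constancy parameter
  obtain ⟨ε, hε0, hεP⟩ : ∃ ε : ℝ, 0 < ε ∧ ∀ i, 2*d < lam i → 2*d + ε ≤ lam i := by
    rcases (Finset.univ.filter fun i : Fin n => 2*d < lam i).eq_empty_or_nonempty with hE | hE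
    · refine ⟨1, one_pos, fun i hi => ?_⟩
      exfalso
      have : i ∈ (Finset.univ.filter fun i : Fin n => 2*d < lam i) :=
        Finset.mem_filter.mpr ⟨Finset.mem_univ i, hi⟩
      rw [hE] at this
      exact absurd this (Finset.notMem_empty i)
    · obtain ⟨i0, hi0mem, hi0min⟩ := Finset.exists_min_image _ lam hE
      have h2d : 2*d < lam i0 := (Finset.mem_filter.mp hi0mem).2
      refine ⟨lam i0 - 2*d, by linarith, fun i hi => ?_⟩
      have := hi0min i (Finset.mem_filter.mpr ⟨Finset.mem_univ i, hi⟩)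
      linarith
  have hconst : ∀ δ : ℝ, d ≤ δ → δ < d + ε/2 → bigN lam (2*δ) = bigN lam (2*d) := by
    intro δ h1 h2
    unfold bigN
    apply le_antisymm
    · apply Finset.card_le_card
      intro i hi
      simp only [Finset.mem_filter, Finset.mem_univ, true_and] at hi ⊢
      by_contra hlt
      push_neg at hlt
      have := hεP i hlt
      linarith
    · apply Finset.card_le_card
      intro i hi
      simp only [Finset.mem_filter, Finset.mem_univ, true_and] at hi ⊢
      linarith
  have hkey1 : 1/(12*d^2) ≤ (bigN lam (2*d) : ℝ) := by
    by_contra hcon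
    push_neg at hcon
    obtain ⟨c, hc⟩ : ∃ c : ℕ, c = bigN lam (2*d) := ⟨_, rfl⟩
    rw [← hc] at hcon
    rcases Nat.eq_zero_or_pos c with hc0 | hcpos
    · have hlt : sInf A < d + ε/2 := by rw [← hd]; linarith
      obtain ⟨δ, hδA, hδlt⟩ := exists_lt_of_csInf_lt hAne hlt
      have hNδ : bigN lam (2*δ) = c :=
        (hconst δ (by rw [hd]; exact csInf_le hbdd hδA) hδlt).trans hc.symm
      have h1 := hδA.2
      rw [hNδ, hc0] at h1
      have hδ0 : (0:ℝ) < δ := hδA.1.1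
      have h2 : (0:ℝ) < 1/(12*δ^2) := by positivity
      push_cast at h1
      linarith
    · have hcpos' : (0:ℝ) < c := by exact_mod_cast hcpos
      have hds : d < Real.sqrt (1/(12*c)) := by
        rw [Real.lt_sqrt hd0.le, lt_div_iff₀ (by positivity)]
        rw [lt_div_iff₀ (by positivity)] at hcon
        nlinarith
      have hx : d < min (Real.sqrt (1/(12*c))) (d + ε/2) := lt_min hds (by linarith)
      have hx' : sInf A < min (Real.sqrt (1/(12*c))) (d + ε/2) := by rw [← hd]; exact hx
      obtain ⟨δ, hδA, hδlt⟩ := exists_lt_of_csInf_lt hAne hx'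
      have hδd : d ≤ δ := by rw [hd]; exact csInf_le hbdd hδA
      have hNδ : bigN lam (2*δ) = c :=
        (hconst δ hδd (lt_of_lt_of_le hδlt (min_le_right _ _))).trans hc.symm
      have hδs : δ < Real.sqrt (1/(12*c)) := lt_of_lt_of_le hδlt (min_le_left _ _)
      have hδ0 : 0 < δ := hδA.1.1
      have hδ2 : δ^2 < 1/(12*(c:ℝ)) := by
        rwa [Real.lt_sqrt hδ0.le] at hδs
      have h1 := hδA.2
      rw [hNδ] at h1
      rw [div_le_iff₀ (by positivity)] at h1
      rw [lt_div_iff₀ (by positivity)] at hδ2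
      nlinarith
  have hkey2 : (smallN lam (2*d) : ℝ) ≤ 1/(12*d^2) := by
    by_contra hcon
    push_neg at hcon
    obtain ⟨c', hc'⟩ : ∃ c' : ℕ, c' = smallN lam (2*d) := ⟨_, rfl⟩
    rw [← hc'] at hcon
    have hc'pos : 0 < c' := by
      rcases Nat.eq_zero_or_pos c' with h0 | hp
      · exfalso
        rw [h0] at hcon
        push_cast at hcon
        have : (0:ℝ) < 1/(12*d^2) := by positivity
        linarith
      · exact hp
    have hc'pos' : (0:ℝ) < c' := by exact_mod_cast hc'pos
    have hF : (Finset.univ.filter fun i : Fin n => lam i < 2*d).Nonempty :=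
      Finset.card_pos.mp (show 0 < (Finset.univ.filter fun i : Fin n => lam i < 2*d).card
        from (show 0 < smallN lam (2*d) from hc' ▸ hc'pos))
    obtain ⟨i0, hi0mem, hi0max⟩ := Finset.exists_max_image _ lam hF
    have hM : lam i0 < 2*d := (Finset.mem_filter.mp hi0mem).2
    have hs : Real.sqrt (1/(12*c')) < d := by
      rw [Real.sqrt_lt' hd0, div_lt_iff₀ (by positivity)]
      rw [div_lt_iff₀ (by positivity)] at hcon
      nlinarith
    obtain ⟨l, hl⟩ : ∃ l : ℝ, l = max (Real.sqrt (1/(12*(c':ℝ)))) (lam i0 / 2) := ⟨_, rfl⟩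
    have hld : l < d := hl ▸ max_lt hs (by linarith)
    obtain ⟨δ, hδ⟩ : ∃ δ : ℝ, δ = (l + d)/2 := ⟨_, rfl⟩
    have hlδ : l < δ := by rw [hδ]; linarith
    have hδd : δ < d := by rw [hδ]; linarith
    have hδ0 : 0 < δ :=
      lt_of_le_of_lt (le_trans (Real.sqrt_nonneg _) (hl ▸ le_max_left _ _)) hlδ
    have hNδ : bigN lam (2*δ) = c' := by
      rw [hc']
      unfold bigN smallN
      congr 1
      apply Finset.filter_congr
      intro i _
      constructor
      · intro hi
        linarith
      · intro hi
        have h1 : lam i ≤ lam i0 := hi0max i (Finset.mem_filter.mpr ⟨Finset.mem_univ i, hi⟩)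
        have h2 : lam i0 / 2 ≤ l := hl ▸ le_max_right _ _
        linarith
    have hδA : δ ∈ A := by
      refine ⟨⟨hδ0, by linarith⟩, ?_⟩
      rw [hNδ]
      have hsδ : Real.sqrt (1/(12*(c':ℝ))) < δ := lt_of_le_of_lt (hl ▸ le_max_left _ _) hlδ
      have hδ2 : 1/(12*(c':ℝ)) < δ^2 := by
        have h0 : 0 ≤ 1/(12*(c':ℝ)) := by positivity
        nlinarith [Real.sq_sqrt h0, Real.sqrt_nonneg (1/(12*(c':ℝ)))]
      rw [div_le_iff₀ (by positivity)]
      rw [div_lt_iff₀ (by positivity)] at hδ2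
      nlinarith
    have : d ≤ δ := by rw [hd]; exact csInf_le hbdd hδA
    linarith
  exact ⟨d, ⟨hd0, hd4⟩, hkey1, hkey2⟩
end

section
/- Let k ≥ 1 and δ ≥ 0, let φ(u) = e^{−u²/2}/√(2π) be the standard normal density and Φ its cumulative distribution function. Then ∫_{ℝ^k} max over τ ∈ {−1,1}^k of ∏_{j=1}^k φ(xⱼ − δτⱼ) dx = (2Φ(δ))^k, and moreover (2Φ(δ))^k ≤ e^{δk}. -/
noncomputable section

/-- The standard normal density `φ(u) = e^{−u²/2}/√(2π)`. -/
def stdphi (u : ℝ) : ℝ := Real.exp (-u^2/2) / Real.sqrt (2*Real.pi)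

/-- The standard normal cumulative distribution function. -/
def Phi (r : ℝ) : ℝ := ∫ u in Set.Iic r, stdphi u

open MeasureTheory Set

lemma stdphi_nonneg (u : ℝ) : 0 ≤ stdphi u :=
  div_nonneg (Real.exp_pos _).le (Real.sqrt_nonneg _)

lemma stdphi_continuous : Continuous stdphi :=
  ((Real.continuous_exp.comp (by continuity)).div_const _)

lemma stdphi_le_stdphi {a b : ℝ} (h : a^2 ≤ b^2) : stdphi b ≤ stdphi a := by
  unfold stdphi
  gcongr

lemma integrable_stdphi : Integrable stdphi := by
  have h : stdphi = fun u => Real.exp (-(1/2 : ℝ) * u ^ 2) * (Real.sqrt (2*Real.pi))⁻¹ := by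
    funext u; unfold stdphi; rw [div_eq_mul_inv]; ring_nf
  rw [h]
  exact (integrable_exp_neg_mul_sq (by norm_num)).mul_const _

lemma integral_stdphi : ∫ u, stdphi u = 1 := by
  have h : ∫ u, stdphi u = (∫ u : ℝ, Real.exp (-(1/2 : ℝ) * u ^ 2)) / Real.sqrt (2*Real.pi) := by
    rw [← integral_div]
    congr 1 with u
    unfold stdphi; ring_nf
  rw [h, integral_gaussian]
  rw [div_eq_one_iff_eq (by positivity)]
  congr 1
  rw [div_div_eq_mul_div, div_one, mul_comm]

lemma setIntegral_Ioi_add (f : ℝ → ℝ) (a c : ℝ) :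
    ∫ x in Ioi a, f (x + c) = ∫ x in Ioi (a + c), f x := by
  have A : MeasurableEmbedding (fun x : ℝ => x + c) :=
    (Homeomorph.addRight c).isClosedEmbedding.measurableEmbedding
  have := A.setIntegral_map (μ := volume) f (Ioi (a + c))
  rw [map_add_right_eq_self (volume : Measure ℝ) c] at this
  rw [Set.preimage_add_const_Ioi, add_sub_cancel_right] at this
  exact this.symm

lemma Phi_nonneg (r : ℝ) : 0 ≤ Phi r :=
  setIntegral_nonneg measurableSet_Iic fun u _ => stdphi_nonneg u

lemma Phi_add_Ioi (r : ℝ) : Phi r + ∫ u in Ioi r, stdphi u = 1 := by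
  rw [Phi, intervalIntegral.integral_Iic_add_Ioi integrable_stdphi.integrableOn integrable_stdphi.integrableOn,
    integral_stdphi]

lemma stdphi_even (u : ℝ) : stdphi (-u) = stdphi u := by
  unfold stdphi; rw [neg_pow]; ring_nf

lemma Phi_neg (r : ℝ) : Phi (-r) = 1 - Phi r := by
  have h1 : Phi (-r) = ∫ u in Ioi r, stdphi u := by
    have h := integral_comp_neg_Iic (-r) stdphi
    rw [neg_neg] at h
    rw [Phi, ← h]
    exact setIntegral_congr_fun measurableSet_Iic fun u _ => (stdphi_even u).symm
  have := Phi_add_Ioi r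
  linarith

/-- key 1D computation: integral of `max (stdphi (u - δ)) (stdphi (u + δ))` is `2 * Phi δ`. -/
lemma integral_max_stdphi (δ : ℝ) (hδ : 0 ≤ δ) :
    ∫ u : ℝ, max (stdphi (u - δ)) (stdphi (u + δ)) = 2 * Phi δ := by
  have hmax : ∀ u : ℝ, max (stdphi (u - δ)) (stdphi (u + δ)) = stdphi (|u| - δ) := by
    intro u
    rcases le_or_gt 0 u with hu | hu
    · rw [abs_of_nonneg hu, max_eq_left]
      exact stdphi_le_stdphi (by nlinarith)
    · rw [abs_of_neg hu, max_eq_right, ← neg_add', stdphi_even]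
      exact stdphi_le_stdphi (by nlinarith)
  simp_rw [hmax]
  rw [integral_comp_abs (f := fun t => stdphi (t - δ))]
  simp_rw [sub_eq_add_neg]
  rw [setIntegral_Ioi_add stdphi 0 (-δ), zero_add]
  have h1 := Phi_add_Ioi (-δ)
  have h2 := Phi_neg δ
  linarith

lemma sup'_prod_max {k : ℕ} (g : Fin k → Bool → ℝ) (hg : ∀ j b, 0 ≤ g j b) :
    Finset.univ.sup' Finset.univ_nonempty (fun τ : Fin k → Bool => ∏ j, g j (τ j)) =
      ∏ j, max (g j true) (g j false) := by
  apply le_antisymm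
  · apply Finset.sup'_le
    intro τ _
    apply Finset.prod_le_prod (fun j _ => hg j (τ j))
    intro j _
    cases h : τ j
    · exact le_max_right _ _
    · exact le_max_left _ _
  · have key : ∀ τ0 : Fin k → Bool, (∀ j, max (g j true) (g j false) = g j (τ0 j)) →
        ∏ j, max (g j true) (g j false) ≤
          Finset.univ.sup' Finset.univ_nonempty (fun τ : Fin k → Bool => ∏ j, g j (τ j)) := by
      intro τ0 h
      calc ∏ j, max (g j true) (g j false) = ∏ j, g j (τ0 j) := by
            exact Finset.prod_congr rfl fun j _ => h j
        _ ≤ _ := Finset.le_sup' (fun τ : Fin k → Bool => ∏ j, g j (τ j)) (Finset.mem_univ τ0)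
    exact key (fun j => if g j false ≤ g j true then true else false) (fun j => by
      show max (g j true) (g j false) = g j (if g j false ≤ g j true then true else false)
      split_ifs with h
      · exact max_eq_left h
      · exact max_eq_right (le_of_not_ge h))

/-- `∫_{ℝ^k} max_{τ ∈ {−1,1}^k} ∏ⱼ φ(xⱼ − δτⱼ) dx = (2Φ(δ))^k`, and
`(2Φ(δ))^k ≤ e^{δk}`. -/
theorem gaussian_pointwise_max_integral (k : ℕ) (hk : 1 ≤ k) (δ : ℝ) (hδ : 0 ≤ δ) :
    (∫ x : Fin k → ℝ,
        Finset.univ.sup' Finset.univ_nonempty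
          (fun τ : Fin k → Bool =>
            ∏ j, stdphi (x j - δ * (if τ j then 1 else -1)))) = (2 * Phi δ) ^ k ∧
    (2 * Phi δ) ^ k ≤ Real.exp (δ * k) := by
  constructor
  · have heq : (fun x : Fin k → ℝ =>
        Finset.univ.sup' Finset.univ_nonempty
          (fun τ : Fin k → Bool =>
            ∏ j, stdphi (x j - δ * (if τ j then 1 else -1)))) =
        fun x : Fin k → ℝ => ∏ j, max (stdphi (x j - δ)) (stdphi (x j + δ)) := by
      funext x
      rw [sup'_prod_max (fun j b => stdphi (x j - δ * (if b then 1 else -1)))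
        (fun j b => stdphi_nonneg _)]
      apply Finset.prod_congr rfl
      intro j _
      norm_num
    rw [heq,
      integral_fintype_prod_volume_eq_pow (fun u : ℝ => max (stdphi (u - δ)) (stdphi (u + δ))),
      Fintype.card_fin, integral_max_stdphi δ hδ]
  · have hPhi : Phi δ ≤ 1/2 + δ/2 := by
      have hsplit : Phi δ = Phi 0 + ∫ u in Ioc 0 δ, stdphi u := by
        rw [Phi, Phi, ← setIntegral_union]
        · rw [Iic_union_Ioc_eq_Iic hδ]
        · exact Set.Iic_disjoint_Ioc le_rfl
        · exact measurableSet_Ioc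
        · exact integrable_stdphi.integrableOn
        · exact integrable_stdphi.integrableOn
      have hPhi0 : Phi 0 = 1/2 := by
        have := Phi_neg 0
        rw [neg_zero] at this
        linarith
      have hbound : ∫ u in Ioc 0 δ, stdphi u ≤ δ/2 := by
        have h1 : ∫ u in Ioc 0 δ, stdphi u ≤ ∫ _u in Ioc 0 δ, (1/2 : ℝ) := by
          apply setIntegral_mono_on integrable_stdphi.integrableOn
            (integrableOn_const measure_Ioc_lt_top.ne) measurableSet_Ioc
          intro u _
          unfold stdphi
          rw [div_le_div_iff₀ (by positivity) (by norm_num)]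
          have h2 : (2:ℝ) ≤ Real.sqrt (2 * Real.pi) := by
            have h4 : Real.sqrt 4 ≤ Real.sqrt (2 * Real.pi) :=
              Real.sqrt_le_sqrt (by nlinarith [Real.pi_gt_three])
            rwa [show (4:ℝ) = 2^2 by norm_num,
              Real.sqrt_sq (by norm_num : (0:ℝ) ≤ 2)] at h4
          have h3 : Real.exp (-u^2/2) ≤ 1 := by
            rw [Real.exp_le_one_iff]
            nlinarith [sq_nonneg u]
          nlinarith [Real.sqrt_nonneg (2 * Real.pi), Real.exp_pos (-u^2/2)]
        rw [setIntegral_const] at h1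
        simp only [Real.volume_Ioc, smul_eq_mul] at h1
        rw [Real.volume_real_Ioc_of_le hδ, sub_zero] at h1
        linarith
      linarith
    have h0 : (0:ℝ) ≤ 2 * Phi δ := by have := Phi_nonneg δ; linarith
    calc (2 * Phi δ) ^ k ≤ (Real.exp δ) ^ k := by
          apply pow_le_pow_left₀ h0
          have := Real.add_one_le_exp δ
          linarith
      _ = Real.exp (δ * k) := by
          rw [← Real.exp_nat_mul, mul_comm]
end
end

section
/- Let d ≥ 1 and consider the family of subsets of ℝ^d × ℝ given by 𝒢 = { {(w, y) ∈ ℝ^d × ℝ : (y − ηᵀw)·(ηᵀw) ≥ 0} : η ∈ ℝ^d, η ≠ 0 }. Then every finite subset of ℝ^d × ℝ that is shattered by 𝒢 has cardinality at most 200d; that is, the VC dimension of 𝒢 is at most 200d. -/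
open Matrix Finset

/-- `k^k ≤ 3^k k!`. -/
lemma pow_self_le_three_pow_mul_factorial (k : ℕ) : k ^ k ≤ 3 ^ k * k.factorial := by
  have h := Real.pow_div_factorial_le_exp (x := (k : ℝ)) (Nat.cast_nonneg k) k
  have hexp : Real.exp (k : ℝ) ≤ (3 : ℝ) ^ k := by
    have h1 : Real.exp (k : ℝ) = Real.exp 1 ^ k := by
      rw [← Real.exp_nat_mul]; norm_num
    rw [h1]
    exact pow_le_pow_left₀ (Real.exp_pos 1).le
      (le_of_lt (lt_trans Real.exp_one_lt_d9 (by norm_num))) k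
  have hfac : (0 : ℝ) < (k.factorial : ℝ) := by exact_mod_cast k.factorial_pos
  have : ((k : ℝ)) ^ k ≤ 3 ^ k * (k.factorial : ℝ) := by
    rw [div_le_iff₀ hfac] at h
    exact h.trans (mul_le_mul_of_nonneg_right hexp hfac.le)
  exact_mod_cast this

lemma choose_mono_right {n i j : ℕ} (hij : i ≤ j) (hj : j ≤ n / 2) :
    n.choose i ≤ n.choose j := by
  obtain ⟨e, rfl⟩ := Nat.exists_eq_add_of_le hij
  clear hij
  induction e with
  | zero => simp
  | succ e ih =>
      refine (ih (by omega)).trans ?_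
      rw [show i + (e + 1) = (i + e) + 1 by ring]
      exact Nat.choose_le_succ_of_lt_half_left (by omega)

lemma arith_bound (d : ℕ) (hd : 1 ≤ d) :
    (∑ i ∈ Finset.Iic (d + 1), Nat.choose (200 * d + 1) i) ^ 4 < 2 ^ (200 * d + 1) := by
  set k := d + 1 with hk
  set n := 200 * d + 1 with hn
  have hhalf : k ≤ n / 2 := by omega
  have hmono : ∀ i ∈ Finset.Iic k, n.choose i ≤ n.choose k := fun i hi =>
    choose_mono_right (Finset.mem_Iic.1 hi) hhalf
  have hsum : (∑ i ∈ Finset.Iic k, n.choose i) ≤ (k + 1) * n.choose k := by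
    calc (∑ i ∈ Finset.Iic k, n.choose i) ≤ (Finset.Iic k).card • n.choose k :=
          Finset.sum_le_card_nsmul _ _ _ hmono
      _ = (k + 1) * n.choose k := by rw [Nat.card_Iic, smul_eq_mul]
  have hchoose : n.choose k ≤ 600 ^ k := by
    have h1 : n.choose k * k.factorial ≤ n ^ k := by
      rw [mul_comm, ← Nat.descFactorial_eq_factorial_mul_choose]
      exact Nat.descFactorial_le_pow n k
    have h2 : n ^ k ≤ (200 * k) ^ k := Nat.pow_le_pow_left (by omega) k
    have h3 : (200 * k) ^ k ≤ 600 ^ k * k.factorial := by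
      calc (200 * k) ^ k = 200 ^ k * k ^ k := mul_pow 200 k k
        _ ≤ 200 ^ k * (3 ^ k * k.factorial) :=
            Nat.mul_le_mul_left _ (pow_self_le_three_pow_mul_factorial k)
        _ = 600 ^ k * k.factorial := by rw [← mul_assoc, ← mul_pow]; norm_num
    exact Nat.le_of_mul_le_mul_right ((h1.trans h2).trans h3) k.factorial_pos
  have hbnd : (∑ i ∈ Finset.Iic k, n.choose i) ≤ 2 ^ (11 * k) := by
    calc (∑ i ∈ Finset.Iic k, n.choose i) ≤ (k + 1) * n.choose k := hsum
      _ ≤ 2 ^ k * 600 ^ k := Nat.mul_le_mul (Nat.lt_two_pow_self (n := k)) hchoose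
      _ = 1200 ^ k := by rw [← mul_pow]; norm_num
      _ ≤ (2 ^ 11) ^ k := Nat.pow_le_pow_left (by norm_num) k
      _ = 2 ^ (11 * k) := by rw [← pow_mul]
  calc (∑ i ∈ Finset.Iic k, n.choose i) ^ 4 ≤ (2 ^ (11 * k)) ^ 4 :=
        Nat.pow_le_pow_left hbnd 4
    _ = 2 ^ (44 * k) := by rw [← pow_mul]; ring_nf
    _ < 2 ^ n := Nat.pow_lt_pow_right (by norm_num) (by omega)


/-- A family of halfspace-type subsets determined by a feature map into `ℝ^m` has
VC dimension at most `m`. -/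
lemma vcDim_le_of_linear {α : Type*} [Fintype α] [DecidableEq α] {m : ℕ}
    (g : α → Fin m → ℝ) (𝒜 : Finset (Finset α))
    (h𝒜 : ∀ u ∈ 𝒜, ∃ c : Fin m → ℝ, ∀ a : α, a ∈ u ↔ 0 ≤ c ⬝ᵥ g a) :
    𝒜.vcDim ≤ m := by
  classical
  rw [Finset.vcDim]
  apply Finset.sup_le
  intro s hs'
  have hs : 𝒜.Shatters s := Finset.mem_shatterer.1 hs'
  by_contra hlt
  push_neg at hlt
  -- main step: given coefficients with a positive entry annihilating all dot products, False
  have main : ∀ c : ↥s → ℝ,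
      (∀ η : Fin m → ℝ, ∑ a : ↥s, c a * (η ⬝ᵥ g a.1) = 0) → (∃ a, 0 < c a) → False := by
    rintro c hrel ⟨a0, ha0⟩
    have hT : ((Finset.univ.filter fun a : ↥s => c a < 0).image Subtype.val) ⊆ s := by
      intro x hx
      obtain ⟨a, _, rfl⟩ := Finset.mem_image.1 hx
      exact a.2
    obtain ⟨u, hu𝒜, hsu⟩ := hs hT
    obtain ⟨cη, hcη⟩ := h𝒜 u hu𝒜
    have hmem : ∀ a : ↥s, (c a < 0 ↔ 0 ≤ cη ⬝ᵥ g a.1) := by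
      intro a
      rw [← hcη]
      constructor
      · intro h
        have h1 : (a : α) ∈ s ∩ u := by
          rw [hsu]
          exact Finset.mem_image.2 ⟨a, Finset.mem_filter.2 ⟨Finset.mem_univ _, h⟩, rfl⟩
        exact (Finset.mem_inter.1 h1).2
      · intro h
        have h1 : (a : α) ∈ s ∩ u := Finset.mem_inter.2 ⟨a.2, h⟩
        rw [hsu] at h1
        obtain ⟨b, hb, hba⟩ := Finset.mem_image.1 h1
        rw [Subtype.ext hba] at hb
        exact (Finset.mem_filter.1 hb).2
    have hle : ∀ a : ↥s, a ∈ (Finset.univ : Finset ↥s) → c a * (cη ⬝ᵥ g a.1) ≤ (0 : ℝ) := by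
      intro a _
      rcases lt_or_ge (c a) 0 with h | h
      · exact mul_nonpos_iff.2 (Or.inr ⟨h.le, (hmem a).1 h⟩)
      · have hneg : cη ⬝ᵥ g a.1 < 0 := by
          by_contra hcon
          push_neg at hcon
          exact absurd ((hmem a).2 hcon) (not_lt.2 h)
        exact mul_nonpos_iff.2 (Or.inl ⟨h, hneg.le⟩)
    have hstrict : c a0 * (cη ⬝ᵥ g a0.1) < 0 := by
      have hneg : cη ⬝ᵥ g a0.1 < 0 := by
        by_contra hcon
        push_neg at hcon
        exact absurd ((hmem a0).2 hcon) (not_lt.2 ha0.le)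
      exact mul_neg_of_pos_of_neg ha0 hneg
    have hlt0 : ∑ a : ↥s, c a * (cη ⬝ᵥ g a.1) < 0 := by
      have := Finset.sum_lt_sum hle ⟨a0, Finset.mem_univ a0, hstrict⟩ (g := fun _ => (0 : ℝ))
      simpa using this
    exact hlt0.ne (hrel cη)
  -- kernel of the evaluation linear map is nontrivial
  let L : (↥s → ℝ) →ₗ[ℝ] (Fin m → ℝ) :=
    { toFun := fun c => ∑ a : ↥s, c a • g a.1
      map_add' := fun x y => by
        simp [add_smul, Finset.sum_add_distrib]
      map_smul' := fun r x => by
        simp [smul_smul, Finset.smul_sum] }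
  have hker : LinearMap.ker L ≠ ⊥ := by
    apply LinearMap.ker_ne_bot_of_finrank_lt
    rw [Module.finrank_fintype_fun_eq_card, Module.finrank_fintype_fun_eq_card,
      Fintype.card_coe, Fintype.card_fin]
    exact hlt
  obtain ⟨c, hcmem, hc0⟩ := (Submodule.ne_bot_iff _).1 hker
  have hLc : ∀ i, ∑ a : ↥s, c a * g a.1 i = 0 := by
    intro i
    have h0 : L c = 0 := LinearMap.mem_ker.1 hcmem
    have := congrFun h0 i
    simpa [L, Finset.sum_apply, Finset.univ_eq_attach] using this
  have hrel : ∀ η : Fin m → ℝ, ∑ a : ↥s, c a * (η ⬝ᵥ g a.1) = 0 := by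
    intro η
    calc ∑ a : ↥s, c a * (η ⬝ᵥ g a.1)
        = ∑ a : ↥s, ∑ i, η i * (c a * g a.1 i) := by
          simp only [dotProduct, Finset.mul_sum]
          exact Finset.sum_congr rfl fun a _ => Finset.sum_congr rfl fun i _ => by ring
      _ = ∑ i, η i * ∑ a : ↥s, c a * g a.1 i := by
          rw [Finset.sum_comm]
          exact Finset.sum_congr rfl fun i _ => by rw [Finset.mul_sum]
      _ = 0 := by
          simp only [Finset.univ_eq_attach] at hLc ⊢
          simp [hLc]
  rcases exists_or_forall_not (fun a : ↥s => 0 < c a) with hpos | hnonpos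
  · exact main c hrel hpos
  · have hrel' : ∀ η : Fin m → ℝ, ∑ a : ↥s, (-c) a * (η ⬝ᵥ g a.1) = 0 := by
      intro η
      have h0 := hrel η
      simp only [Pi.neg_apply, neg_mul, Finset.sum_neg_distrib]
      rw [h0, neg_zero]
    have hpos' : ∃ a, 0 < (-c) a := by
      obtain ⟨a, ha⟩ := Function.ne_iff.1 hc0
      refine ⟨a, ?_⟩
      have h1 : c a ≤ 0 := not_lt.1 (hnonpos a)
      have h2 : c a < 0 := lt_of_le_of_ne h1 (by simpa using ha)
      simpa using h2
    exact main (-c) hrel' hpos'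




lemma core_contradiction (d : ℕ) (hd : 1 ≤ d) (S : Finset ((Fin d → ℝ) × ℝ))
    (hcard : S.card = 200 * d + 1)
    (hsh : ∀ T ⊆ S, ∃ η : Fin d → ℝ, η ≠ 0 ∧
      ∀ p ∈ S, (p ∈ T ↔ 0 ≤ (p.2 - η ⬝ᵥ p.1) * (η ⬝ᵥ p.1))) : False := by
  classical
  set α := {x // x ∈ S} with hα
  let w : α → Fin d → ℝ := fun a => a.1.1
  let y : α → ℝ := fun a => a.1.2
  have H : ∀ t : Finset α, ∃ η : Fin d → ℝ,
      ∀ a : α, (a ∈ t ↔ 0 ≤ (y a - η ⬝ᵥ w a) * (η ⬝ᵥ w a)) := by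
    intro t
    obtain ⟨η, -, hprop⟩ := hsh (t.image Subtype.val) (by
      intro x hx
      obtain ⟨a, -, rfl⟩ := Finset.mem_image.1 hx
      exact a.2)
    refine ⟨η, fun a => ?_⟩
    rw [← hprop a.1 a.2]
    constructor
    · exact fun h => Finset.mem_image_of_mem _ h
    · intro h
      obtain ⟨b, hb, hba⟩ := Finset.mem_image.1 h
      rwa [Subtype.ext hba] at hb
  choose ηf hmem using H
  let Aset : Finset α → Finset α := fun t => Finset.univ.filter fun a => 0 ≤ ηf t ⬝ᵥ w a
  let Bset : Finset α → Finset α := fun t => Finset.univ.filter fun a => ηf t ⬝ᵥ w a ≤ 0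
  let Cset : Finset α → Finset α := fun t => Finset.univ.filter fun a => ηf t ⬝ᵥ w a ≤ y a
  let Dset : Finset α → Finset α := fun t => Finset.univ.filter fun a => y a ≤ ηf t ⬝ᵥ w a
  have key : ∀ (t : Finset α) (a : α),
      a ∈ t ↔ ((a ∈ Aset t ∧ a ∈ Cset t) ∨ (a ∈ Dset t ∧ a ∈ Bset t)) := by
    intro t a
    rw [hmem t a, mul_nonneg_iff]
    simp only [Aset, Bset, Cset, Dset, Finset.mem_filter, Finset.mem_univ, true_and,
      sub_nonneg, sub_nonpos]
    tauto
  -- the four pattern families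
  let 𝒜 := (Finset.univ : Finset (Finset α)).image Aset
  let ℬ := (Finset.univ : Finset (Finset α)).image Bset
  let 𝒞 := (Finset.univ : Finset (Finset α)).image Cset
  let 𝒟 := (Finset.univ : Finset (Finset α)).image Dset
  -- counting injection
  have hinj : Set.InjOn (fun t => (Aset t, Bset t, Cset t, Dset t))
      ((Finset.univ : Finset (Finset α)) : Set (Finset α)) := by
    intro t1 _ t2 _ h
    simp only [Prod.mk.injEq] at h
    ext a
    rw [key t1 a, key t2 a, h.1, h.2.1, h.2.2.1, h.2.2.2]
  have hcount : 2 ^ S.card ≤ 𝒜.card * (ℬ.card * (𝒞.card * 𝒟.card)) := by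
    have hmap : ∀ t ∈ (Finset.univ : Finset (Finset α)),
        (Aset t, Bset t, Cset t, Dset t) ∈ 𝒜 ×ˢ ℬ ×ˢ 𝒞 ×ˢ 𝒟 := by
      intro t _
      simp only [Finset.mem_product]
      exact ⟨Finset.mem_image_of_mem _ (Finset.mem_univ t),
        Finset.mem_image_of_mem _ (Finset.mem_univ t),
        Finset.mem_image_of_mem _ (Finset.mem_univ t),
        Finset.mem_image_of_mem _ (Finset.mem_univ t)⟩
    have := Finset.card_le_card_of_injOn _ hmap hinj
    rwa [Finset.card_univ, Fintype.card_finset, Fintype.card_coe,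
      Finset.card_product, Finset.card_product, Finset.card_product] at this
  -- VC dimension bounds
  have hvcA : 𝒜.vcDim ≤ d := by
    apply vcDim_le_of_linear w
    intro u hu
    obtain ⟨t, -, rfl⟩ := Finset.mem_image.1 hu
    exact ⟨ηf t, fun a => by simp [Aset]⟩
  have hvcB : ℬ.vcDim ≤ d := by
    apply vcDim_le_of_linear w
    intro u hu
    obtain ⟨t, -, rfl⟩ := Finset.mem_image.1 hu
    refine ⟨-(ηf t), fun a => ?_⟩
    simp [Bset, neg_dotProduct, neg_nonneg]
  have hvcC : 𝒞.vcDim ≤ d + 1 := by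
    apply vcDim_le_of_linear (fun a => Matrix.vecCons (y a) (w a))
    intro u hu
    obtain ⟨t, -, rfl⟩ := Finset.mem_image.1 hu
    refine ⟨Matrix.vecCons 1 (-(ηf t)), fun a => ?_⟩
    rw [Matrix.cons_dotProduct_cons, neg_dotProduct]
    simp only [Cset, Finset.mem_filter, Finset.mem_univ, true_and, one_mul]
    constructor
    · intro h; linarith
    · intro h; linarith
  have hvcD : 𝒟.vcDim ≤ d + 1 := by
    apply vcDim_le_of_linear (fun a => Matrix.vecCons (y a) (w a))
    intro u hu
    obtain ⟨t, -, rfl⟩ := Finset.mem_image.1 hu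
    refine ⟨Matrix.vecCons (-1) (ηf t), fun a => ?_⟩
    rw [Matrix.cons_dotProduct_cons]
    simp only [Dset, Finset.mem_filter, Finset.mem_univ, true_and, neg_one_mul]
    constructor
    · intro h; linarith
    · intro h; linarith
  -- Sauer-Shelah bounds
  have sauer : ∀ (𝒳 : Finset (Finset α)), 𝒳.vcDim ≤ d + 1 →
      𝒳.card ≤ ∑ i ∈ Finset.Iic (d + 1), (S.card).choose i := by
    intro 𝒳 h𝒳
    calc 𝒳.card ≤ 𝒳.shatterer.card := Finset.card_le_card_shatterer 𝒳
      _ ≤ ∑ i ∈ Finset.Iic 𝒳.vcDim, (Fintype.card α).choose i :=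
          Finset.card_shatterer_le_sum_vcDim
      _ ≤ ∑ i ∈ Finset.Iic (d + 1), (Fintype.card α).choose i :=
          Finset.sum_le_sum_of_subset (Finset.Iic_subset_Iic.2 h𝒳)
      _ = ∑ i ∈ Finset.Iic (d + 1), (S.card).choose i := by rw [Fintype.card_coe]
  have hfinal : 2 ^ S.card ≤ (∑ i ∈ Finset.Iic (d + 1), (S.card).choose i) ^ 4 := by
    calc 2 ^ S.card ≤ 𝒜.card * (ℬ.card * (𝒞.card * 𝒟.card)) := hcount
      _ ≤ (∑ i ∈ Finset.Iic (d + 1), (S.card).choose i) * ((∑ i ∈ Finset.Iic (d + 1), (S.card).choose i) * ((∑ i ∈ Finset.Iic (d + 1), (S.card).choose i) * (∑ i ∈ Finset.Iic (d + 1), (S.card).choose i))) := by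
          gcongr
          · exact sauer 𝒜 (hvcA.trans (Nat.le_succ d))
          · exact sauer ℬ (hvcB.trans (Nat.le_succ d))
          · exact sauer 𝒞 hvcC
          · exact sauer 𝒟 hvcD
      _ = (∑ i ∈ Finset.Iic (d + 1), (S.card).choose i) ^ 4 := by ring
  rw [hcard] at hfinal
  have harith := arith_bound d hd
  omega


/-- the family
`𝒢 = { {(w,y) : (y − ηᵀw)(ηᵀw) ≥ 0} : η ∈ ℝ^d, η ≠ 0 }` of subsets of `ℝ^d × ℝ`
has VC dimension at most `200d`: every finite subset of `ℝ^d × ℝ` shattered by `𝒢` has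
cardinality at most `200d`. -/
theorem regression_depth_class_vc_bound (d : ℕ) (hd : 1 ≤ d)
    (Sfin : Finset ((Fin d → ℝ) × ℝ))
    (hshatter : ∀ T ⊆ Sfin, ∃ η : Fin d → ℝ, η ≠ 0 ∧
      ∀ p ∈ Sfin, (p ∈ T ↔ 0 ≤ (p.2 - η ⬝ᵥ p.1) * (η ⬝ᵥ p.1))) :
    Sfin.card ≤ 200 * d := by
  classical
  by_contra hc
  push_neg at hc
  obtain ⟨S, hSsub, hScard⟩ := Finset.exists_subset_card_eq
    (show 200 * d + 1 ≤ Sfin.card by omega)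
  exact core_contradiction d hd S hScard (fun T hT => by
    obtain ⟨η, hη, hp⟩ := hshatter T (hT.trans hSsub)
    exact ⟨η, hη, fun p hp' => hp p (hSsub hp')⟩)
end
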